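/- arXiv:1803.11066 — 5 statements merged into one kernel-verified Lean document; each statement's English description precedes it below -/
import Mathlib

section
/- Let p be an odd prime, let s be an integer with 0 < s < p−1, and let a, a′ be integers with 0 < a, a′ < p and a′ ≡ s·a (mod p). Then b_{1,s}(a) = 0 in F_p (i.e., the residue class of a in F_p is a root of the polynomial b_{1,s}(α)) if and only if a + a′ < p. -/
open Polynomial

noncomputable def binomF {K : Type*} [Field K] (f : K) (m : ℕ) : K :=
  Polynomial.eval f (descPochhammer K m) / (m.factorial : K)

noncomputable def bPoly (p : ℕ) [Fact p.Prime] (r s : ℕ) : Polynomial (ZMod p) :=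
  ∑ k ∈ Finset.range p,
    Polynomial.C ((-(r : ZMod p) / (s : ZMod p)) ^ k /
        (((p - 1 - k).factorial : ZMod p) * (k.factorial : ZMod p))) *
      Polynomial.eval (Polynomial.C (r : ZMod p) * Polynomial.X - 1)
        (descPochhammer (Polynomial (ZMod p)) (p - 1 - k)) *
      Polynomial.eval (Polynomial.C (s : ZMod p) * Polynomial.X - 1)
        (descPochhammer (Polynomial (ZMod p)) k)

lemma factCast_ne_zero (p : ℕ) [Fact p.Prime] {n : ℕ} (h : n < p) :
    ((n.factorial : ℕ) : ZMod p) ≠ 0 := by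
  rw [Ne, ZMod.natCast_eq_zero_iff]
  exact fun hd => absurd ((Nat.Prime.dvd_factorial Fact.out).mp hd) (by omega)

lemma eval_eval_descPoch {R : Type*} [CommRing R] (c x : R) (m : ℕ) :
    Polynomial.eval x (Polynomial.eval (Polynomial.C c * Polynomial.X - 1)
      (descPochhammer (Polynomial R) m)) =
    Polynomial.eval (c * x - 1) (descPochhammer R m) := by
  rw [← descPochhammer_map (Polynomial.C : R →+* Polynomial R) m, Polynomial.eval_map,
    ← Polynomial.comp, Polynomial.eval_comp]
  simp

lemma lemA (p a : ℕ) [Fact p.Prime] (hap : a ≤ p) :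
    ∀ j, j ≤ a - 1 → (((p - a + j).factorial * (a - 1 - j).factorial : ℕ) : ZMod p)
      = (-1) ^ j * (((p - a).factorial * (a - 1).factorial : ℕ) : ZMod p) := by
  intro j
  induction j with
  | zero => simp
  | succ j ih =>
    intro hj
    have h1 : p - a + (j + 1) = (p - a + j) + 1 := by omega
    have key : ((p - a + j + 1 : ℕ) : ZMod p) = -((a - 1 - j : ℕ) : ZMod p) := by
      have hsum : ((p - a + j + 1) + (a - 1 - j) : ℕ) = p := by omega
      have h := congrArg (Nat.cast : ℕ → ZMod p) hsum
      push_cast at h ⊢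
      rw [ZMod.natCast_self] at h
      linear_combination h
    have ih' := ih (by omega)
    have hf : (a - 1 - j).factorial = (a - 1 - j) * (a - 1 - (j + 1)).factorial := by
      have h2 : a - 1 - j = (a - 1 - (j + 1)) + 1 := by omega
      rw [h2, Nat.factorial_succ]
    rw [hf] at ih'
    rw [h1, Nat.factorial_succ]
    push_cast at ih' key ⊢
    rw [pow_succ]
    linear_combination (((p - a + j).factorial : ZMod p) *
      ((a - 1 - (j+1)).factorial : ZMod p)) * key - ih'

lemma term_eq (p a a' : ℕ) [Fact p.Prime] (ha0 : 0 < a) (hap : a < p) (ha'p : a' < p)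
    (hd : p < a + a') (j : ℕ) (hj : j ≤ a + a' - p - 1) :
    (((a-1).choose (a-1-j) : ℕ) : ZMod p) * (((a'-1).choose (p-a+j) : ℕ) : ZMod p) =
      (-1)^j * (((a+a'-p-1).choose j : ℕ) : ZMod p) * (((a'-1).choose (p-a) : ℕ) : ZMod p) := by
  set d := a + a' - p with hdd
  have hF : (((p-a+j).factorial : ℕ) : ZMod p) * (((a-1-j).factorial : ℕ) : ZMod p) *
      ((((j).factorial : ℕ) : ZMod p) * (((d-1-j).factorial : ℕ) : ZMod p)) ≠ 0 := by
    refine mul_ne_zero (mul_ne_zero ?_ ?_) (mul_ne_zero ?_ ?_) <;>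
      exact factCast_ne_zero p (by omega)
  apply mul_right_cancel₀ hF
  have h1 : (a-1).choose (a-1-j) = (a-1).choose j := Nat.choose_symm (by omega)
  have h2 := Nat.choose_mul_factorial_mul_factorial (show j ≤ a-1 by omega)
  have h3 := Nat.choose_mul_factorial_mul_factorial (show p-a+j ≤ a'-1 by omega)
  have e3 : a'-1-(p-a+j) = d-1-j := by omega
  rw [e3] at h3
  have h4 := Nat.choose_mul_factorial_mul_factorial (show j ≤ d-1 from hj)
  have h5 := Nat.choose_mul_factorial_mul_factorial (show p-a ≤ a'-1 by omega)
  have e5 : a'-1-(p-a) = d-1 := by omega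
  rw [e5] at h5
  have hA := lemA p a (le_of_lt hap) j (by omega)
  push_cast at hA
  have hsq : ((-1 : ZMod p))^j * (-1)^j = 1 := by
    rw [← pow_add, ← two_mul, pow_mul]; norm_num
  have c2 : (((a-1).choose j : ℕ) : ZMod p) * ((j.factorial : ℕ) : ZMod p) *
      (((a-1-j).factorial : ℕ) : ZMod p) = (((a-1).factorial : ℕ) : ZMod p) := by
    exact_mod_cast congrArg (Nat.cast : ℕ → ZMod p) h2
  have c3 : (((a'-1).choose (p-a+j) : ℕ) : ZMod p) * (((p-a+j).factorial : ℕ) : ZMod p) *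
      (((d-1-j).factorial : ℕ) : ZMod p) = (((a'-1).factorial : ℕ) : ZMod p) := by
    exact_mod_cast congrArg (Nat.cast : ℕ → ZMod p) h3
  have c4 : (((d-1).choose j : ℕ) : ZMod p) * ((j.factorial : ℕ) : ZMod p) *
      (((d-1-j).factorial : ℕ) : ZMod p) = (((d-1).factorial : ℕ) : ZMod p) := by
    exact_mod_cast congrArg (Nat.cast : ℕ → ZMod p) h4
  have c5 : (((a'-1).choose (p-a) : ℕ) : ZMod p) * (((p-a).factorial : ℕ) : ZMod p) *
      (((d-1).factorial : ℕ) : ZMod p) = (((a'-1).factorial : ℕ) : ZMod p) := by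
    exact_mod_cast congrArg (Nat.cast : ℕ → ZMod p) h5
  have hL : (((a-1).choose j : ℕ) : ZMod p) * (((a'-1).choose (p-a+j) : ℕ) : ZMod p) *
      ((((p-a+j).factorial : ℕ) : ZMod p) * (((a-1-j).factorial : ℕ) : ZMod p) *
        ((((j).factorial : ℕ) : ZMod p) * (((d-1-j).factorial : ℕ) : ZMod p))) =
      (((a-1).factorial : ℕ) : ZMod p) * (((a'-1).factorial : ℕ) : ZMod p) := by
    linear_combination ((((a'-1).choose (p-a+j) : ℕ) : ZMod p) * (((p-a+j).factorial : ℕ) : ZMod p) *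
        (((d-1-j).factorial : ℕ) : ZMod p)) * c2 +
      (((a-1).factorial : ℕ) : ZMod p) * c3
  have hR : (-1)^j * (((d-1).choose j : ℕ) : ZMod p) * (((a'-1).choose (p-a) : ℕ) : ZMod p) *
      ((((p-a+j).factorial : ℕ) : ZMod p) * (((a-1-j).factorial : ℕ) : ZMod p) *
        ((((j).factorial : ℕ) : ZMod p) * (((d-1-j).factorial : ℕ) : ZMod p))) =
      (((a-1).factorial : ℕ) : ZMod p) * (((a'-1).factorial : ℕ) : ZMod p) := by
    calc (-1)^j * (((d-1).choose j : ℕ) : ZMod p) * (((a'-1).choose (p-a) : ℕ) : ZMod p) *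
        ((((p-a+j).factorial : ℕ) : ZMod p) * (((a-1-j).factorial : ℕ) : ZMod p) *
          ((((j).factorial : ℕ) : ZMod p) * (((d-1-j).factorial : ℕ) : ZMod p)))
        = ((-1)^j * (-1)^j) * ((((d-1).choose j : ℕ) : ZMod p) * ((j.factorial : ℕ) : ZMod p) *
            (((d-1-j).factorial : ℕ) : ZMod p)) *
          ((((a'-1).choose (p-a) : ℕ) : ZMod p) * (((p-a).factorial : ℕ) : ZMod p)) *
          (((a-1).factorial : ℕ) : ZMod p) := by
          rw [hA]; ring
      _ = 1 * (((d-1).factorial : ℕ) : ZMod p) *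
          ((((a'-1).choose (p-a) : ℕ) : ZMod p) * (((p-a).factorial : ℕ) : ZMod p)) *
          (((a-1).factorial : ℕ) : ZMod p) := by rw [hsq, c4]
      _ = (((a-1).factorial : ℕ) : ZMod p) * (((a'-1).factorial : ℕ) : ZMod p) := by
          linear_combination (((a-1).factorial : ℕ) : ZMod p) * c5
  rw [h1, hL, hR]

theorem stmt12 (p s a a' : ℕ) [Fact p.Prime] (hodd : Odd p)
    (hs0 : 0 < s) (hsp : s < p - 1)
    (ha0 : 0 < a) (hap : a < p) (ha'0 : 0 < a') (ha'p : a' < p)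
    (hmod : a' ≡ s * a [MOD p]) :
    (bPoly p 1 s).eval (a : ZMod p) = 0 ↔ a + a' < p := by
  have hp : p.Prime := Fact.out
  have hp3 : 3 ≤ p := by
    have h1 := Nat.odd_iff.mp hodd
    have h2 := hp.two_le
    omega
  have hsz : ((s : ℕ) : ZMod p) ≠ 0 := by
    rw [Ne, ZMod.natCast_eq_zero_iff]
    exact fun hd => absurd (Nat.le_of_dvd hs0 hd) (by omega)
  have hsne : ((s : ℕ) : ZMod p) ≠ -1 := by
    intro h
    have h2 : ((s : ℕ) : ZMod p) = ((p - 1 : ℕ) : ZMod p) := by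
      rw [h, Nat.cast_sub (by omega), Nat.cast_one, ZMod.natCast_self]; ring
    rw [ZMod.natCast_eq_natCast_iff] at h2
    have := (Nat.ModEq.eq_of_lt_of_lt h2 (by omega) (by omega))
    omega
  have haa : ((1 : ZMod p) * (a : ZMod p) - 1) = ((a - 1 : ℕ) : ZMod p) := by
    rw [Nat.cast_sub ha0]; push_cast; ring
  have hsa : ((s : ZMod p) * (a : ZMod p) - 1) = ((a' - 1 : ℕ) : ZMod p) := by
    have h := (ZMod.natCast_eq_natCast_iff _ _ _).mpr hmod
    rw [Nat.cast_sub ha'0]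
    push_cast at h ⊢
    linear_combination -h
  have hE : (bPoly p 1 s).eval (a : ZMod p) =
      ∑ k ∈ Finset.range p, (-(1 : ZMod p) / (s : ZMod p)) ^ k *
        (((a - 1).choose (p - 1 - k) : ℕ) : ZMod p) * (((a' - 1).choose k : ℕ) : ZMod p) := by
    rw [bPoly, Polynomial.eval_finset_sum]
    refine Finset.sum_congr rfl fun k hk => ?_
    have hk' : k < p := Finset.mem_range.mp hk
    rw [Polynomial.eval_mul, Polynomial.eval_mul, Polynomial.eval_C,
      eval_eval_descPoch, eval_eval_descPoch]
    simp only [Nat.cast_one]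
    rw [haa, hsa,
      descPochhammer_eval_eq_descFactorial, descPochhammer_eval_eq_descFactorial,
      Nat.descFactorial_eq_factorial_mul_choose, Nat.descFactorial_eq_factorial_mul_choose]
    have f1 : (((p - 1 - k).factorial : ℕ) : ZMod p) ≠ 0 := factCast_ne_zero p (by omega)
    have f2 : ((k.factorial : ℕ) : ZMod p) ≠ 0 := factCast_ne_zero p (by omega)
    push_cast
    field_simp
  by_cases hc : a + a' < p
  · simp only [hc, iff_true, hE]
    refine Finset.sum_eq_zero fun k hk => ?_
    rcases lt_or_ge k a' with h | h
    · have : a - 1 < p - 1 - k := by omega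
      rw [Nat.choose_eq_zero_of_lt this]
      push_cast; ring
    · have : a' - 1 < k := by omega
      rw [Nat.choose_eq_zero_of_lt this]
      push_cast; ring
  · simp only [hc, iff_false, hE]
    -- a + a' ≠ p
    have hne : a + a' ≠ p := by
      intro h
      have ha'e : ((a' : ℕ) : ZMod p) = -((a : ℕ) : ZMod p) := by
        have : ((a + a' : ℕ) : ZMod p) = 0 := by rw [h, ZMod.natCast_self]
        push_cast at this
        linear_combination this
      have h2 := (ZMod.natCast_eq_natCast_iff _ _ _).mpr hmod
      push_cast at h2
      have haz : ((a : ℕ) : ZMod p) ≠ 0 := by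
        rw [Ne, ZMod.natCast_eq_zero_iff]
        exact fun hd => absurd (Nat.le_of_dvd ha0 hd) (by omega)
      apply hsne
      have : ((s : ℕ) : ZMod p) * a = -1 * a := by
        rw [← h2]; rw [ha'e]; ring
      exact mul_right_cancel₀ haz this
    have hlt : p < a + a' := by omega
    have htne : -(1 : ZMod p) / (s : ZMod p) ≠ 0 := by
      rw [div_ne_zero_iff]
      exact ⟨neg_ne_zero.mpr one_ne_zero, hsz⟩
    have h1t : (1 : ZMod p) - -(1 : ZMod p) / (s : ZMod p) ≠ 0 := by
      intro h
      apply hsne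
      have h2 : (s : ZMod p) * ((1 : ZMod p) - -(1 : ZMod p) / (s : ZMod p)) = 0 := by
        rw [h, mul_zero]
      rw [mul_sub, mul_div_cancel₀ _ hsz] at h2
      linear_combination h2
    -- restrict the sum
    have hrestrict : ∑ k ∈ Finset.range p, (-(1 : ZMod p) / (s : ZMod p)) ^ k *
        (((a - 1).choose (p - 1 - k) : ℕ) : ZMod p) * (((a' - 1).choose k : ℕ) : ZMod p) =
        ∑ k ∈ Finset.Ico (p - a) a', (-(1 : ZMod p) / (s : ZMod p)) ^ k *
        (((a - 1).choose (p - 1 - k) : ℕ) : ZMod p) * (((a' - 1).choose k : ℕ) : ZMod p) := by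
      refine (Finset.sum_subset ?_ ?_).symm
      · intro k hk
        simp only [Finset.mem_Ico] at hk
        exact Finset.mem_range.mpr (by omega)
      · intro k hk hk2
        simp only [Finset.mem_range] at hk
        simp only [Finset.mem_Ico, not_and, not_lt] at hk2
        rcases lt_or_ge k (p - a) with h | h
        · have : a - 1 < p - 1 - k := by omega
          rw [Nat.choose_eq_zero_of_lt this]; push_cast; ring
        · have : a' - 1 < k := by omega
          rw [Nat.choose_eq_zero_of_lt this]; push_cast; ring
    have hIco : ∑ k ∈ Finset.Ico (p - a) a', (-(1 : ZMod p) / (s : ZMod p)) ^ k *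
        (((a - 1).choose (p - 1 - k) : ℕ) : ZMod p) * (((a' - 1).choose k : ℕ) : ZMod p) =
        ∑ j ∈ Finset.range (a + a' - p), (-(1 : ZMod p) / (s : ZMod p)) ^ (p - a + j) *
        (((a - 1).choose (p - 1 - (p - a + j)) : ℕ) : ZMod p) *
        (((a' - 1).choose (p - a + j) : ℕ) : ZMod p) := by
      rw [Finset.sum_Ico_eq_sum_range, show a' - (p - a) = a + a' - p from by omega]
    have hterm : ∀ j ∈ Finset.range (a + a' - p), (-(1 : ZMod p) / (s : ZMod p)) ^ (p - a + j) *
        (((a - 1).choose (p - 1 - (p - a + j)) : ℕ) : ZMod p) *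
        (((a' - 1).choose (p - a + j) : ℕ) : ZMod p) =
        ((-(1 : ZMod p) / (s : ZMod p)) ^ (p - a) * (((a' - 1).choose (p - a) : ℕ) : ZMod p)) *
        ((-(-(1 : ZMod p) / (s : ZMod p))) ^ j * (((a + a' - p - 1).choose j : ℕ) : ZMod p)) := by
      intro j hj
      have hj' : j ≤ a + a' - p - 1 := by
        simp only [Finset.mem_range] at hj; omega
      have e1 : p - 1 - (p - a + j) = a - 1 - j := by omega
      rw [e1, pow_add, neg_pow]
      have := term_eq p a a' ha0 hap ha'p hlt j hj'
      linear_combination ((-(1 : ZMod p) / (s : ZMod p)) ^ (p - a) *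
        (-(1 : ZMod p) / (s : ZMod p)) ^ j) * this
    rw [hrestrict, hIco, Finset.sum_congr rfl hterm, ← Finset.mul_sum]
    have hbinom : ∑ j ∈ Finset.range (a + a' - p),
        (-(-(1 : ZMod p) / (s : ZMod p))) ^ j * (((a + a' - p - 1).choose j : ℕ) : ZMod p) =
        (1 - -(1 : ZMod p) / (s : ZMod p)) ^ (a + a' - p - 1) := by
      have hd' : a + a' - p = (a + a' - p - 1) + 1 := by omega
      rw [hd']
      rw [show (1 : ZMod p) - -(1 : ZMod p) / (s : ZMod p)
        = -(-(1 : ZMod p) / (s : ZMod p)) + 1 by ring, add_pow]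
      refine Finset.sum_congr rfl fun j hj => ?_
      rw [one_pow]; ring
    rw [hbinom]
    have hchoose : (((a' - 1).choose (p - a) : ℕ) : ZMod p) ≠ 0 := by
      intro h
      have h5 := Nat.choose_mul_factorial_mul_factorial (show p - a ≤ a' - 1 by omega)
      have := congrArg (Nat.cast : ℕ → ZMod p) h5
      push_cast at this
      rw [h, zero_mul, zero_mul] at this
      exact factCast_ne_zero p (show a' - 1 < p by omega) this.symm
    exact mul_ne_zero (mul_ne_zero (pow_ne_zero _ htne) hchoose) (pow_ne_zero _ h1t)
end

section
/- Let p be an odd prime, let s be an integer with 0 < s < p−1, and let a be an integer with 0 < a < p. Then b_{1,s}(a) = 0 in F_p if and only if p does not divide the binomial coefficient C(a + s·a, a). -/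
open Finset Polynomial

section Aux
variable (p : ℕ) [Fact p.Prime]

lemma aux_fact_ne_zero {m : ℕ} (hm : m < p) : ((m.factorial : ZMod p)) ≠ 0 := by
  rw [Ne, ZMod.natCast_eq_zero_iff]
  intro h
  exact absurd ((Nat.Prime.dvd_factorial Fact.out).mp h) (by omega)

lemma aux_not_dvd_choose {n k : ℕ} (hn : n < p) (hk : k ≤ n) : ¬ p ∣ n.choose k := by
  intro h
  have h2 : p ∣ n.factorial := by
    rw [← Nat.choose_mul_factorial_mul_factorial hk]
    exact dvd_mul_of_dvd_left (dvd_mul_of_dvd_left h _) _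
  exact absurd ((Nat.Prime.dvd_factorial Fact.out).mp h2) (by omega)

lemma aux_choose_ne_zero {n k : ℕ} (hn : n < p) (hk : k ≤ n) :
    ((n.choose k : ZMod p)) ≠ 0 := by
  rw [Ne, ZMod.natCast_eq_zero_iff]
  exact aux_not_dvd_choose p hn hk

lemma aux_sum_pow {m : ℕ} (hm : m < 2 * (p - 1)) :
    ∑ x : ZMod p, x ^ m = if m = p - 1 then -1 else 0 := by
  have hp : p.Prime := Fact.out
  have hp2 : 2 ≤ p := hp.two_le
  have hcard : Fintype.card (ZMod p) = p := ZMod.card p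
  have hmain : ∀ n : ℕ, 0 < n → n < p - 1 → ∑ x : ZMod p, x ^ n = 0 := by
    intro n hn0 hn1
    exact FiniteField.sum_pow_lt_card_sub_one (ZMod p) n (by rw [hcard]; exact hn1)
  rcases Nat.lt_trichotomy m (p - 1) with h | h | h
  · rw [if_neg (by omega)]
    rcases Nat.eq_zero_or_pos m with rfl | hm0
    · simp only [pow_zero, Finset.sum_const, Finset.card_univ, hcard, nsmul_one]
      exact ZMod.natCast_self p
    · exact hmain m hm0 h
  · rw [if_pos h, h]
    have key : ∀ x : ZMod p, x ^ (p - 1) = 1 - (if x = 0 then 1 else 0) := by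
      intro x
      by_cases hx : x = 0
      · rw [if_pos hx, hx, zero_pow (by omega)]; ring
      · rw [if_neg hx, ZMod.pow_card_sub_one_eq_one hx]; ring
    rw [Finset.sum_congr rfl fun x _ => key x, Finset.sum_sub_distrib,
      Finset.sum_ite_eq' Finset.univ (0 : ZMod p) (fun _ => (1 : ZMod p))]
    simp only [Finset.sum_const, Finset.card_univ, hcard, nsmul_one, Finset.mem_univ, if_pos]
    rw [ZMod.natCast_self]
    ring
  · rw [if_neg (by omega)]
    have key : ∀ x : ZMod p, x ^ m = x ^ (m - (p - 1)) := by
      intro x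
      by_cases hx : x = 0
      · rw [hx, zero_pow (by omega), zero_pow (by omega)]
      · calc x ^ m = x ^ (p - 1) * x ^ (m - (p - 1)) := by
              rw [← pow_add]; congr 1; omega
          _ = x ^ (m - (p - 1)) := by rw [ZMod.pow_card_sub_one_eq_one hx, one_mul]
    rw [Finset.sum_congr rfl fun x _ => key x]
    exact hmain _ (by omega) (by omega)

lemma aux_expand {K : Type*} [CommRing K] (n : ℕ) (c d y : K) :
    (d + c * y) ^ n
      = ∑ i ∈ Finset.range (n + 1), (n.choose i : K) * c ^ i * d ^ (n - i) * y ^ i := by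
  rw [show d + c * y = c * y + d by ring, add_pow]
  exact Finset.sum_congr rfl fun i _ => by rw [mul_pow]; ring

end Aux

theorem stmt13 (p s a : ℕ) [Fact p.Prime] (hodd : Odd p)
    (hs0 : 0 < s) (hsp : s < p - 1) (ha0 : 0 < a) (hap : a < p) :
    (bPoly p 1 s).eval (a : ZMod p) = 0 ↔ ¬ (p ∣ (a + s * a).choose a) := by
  have hp : p.Prime := Fact.out
  have hp2 : 2 ≤ p := hp.two_le
  have hpodd : p % 2 = 1 := Nat.odd_iff.mp hodd
  have hp3 : 3 ≤ p := by omega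
  -- basic divisibility facts
  have hpa : ¬ p ∣ a := fun h => absurd (Nat.le_of_dvd ha0 h) (by omega)
  have hps : ¬ p ∣ s := fun h => absurd (Nat.le_of_dvd hs0 h) (by omega)
  have hpsa : ¬ p ∣ s * a := fun h => ((hp.dvd_mul).mp h).elim hps hpa
  set t' : ℕ := s * a % p with ht'def
  have ht'0 : 0 < t' := Nat.pos_of_ne_zero fun h => hpsa (Nat.dvd_of_mod_eq_zero h)
  have ht'p : t' < p := Nat.mod_lt _ (by omega)
  have hq : s * a / p * p + s * a % p = s * a := Nat.div_add_mod' (s * a) p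
  have hsa1 : 1 ≤ s * a := Nat.mul_pos hs0 ha0
  set t : ℕ := t' - 1 with htdef
  have htt : (s * a - 1) % p = t := by
    have h1 : s * a - 1 = t + s * a / p * p := by omega
    rw [h1, Nat.add_mul_mod_self_right, Nat.mod_eq_of_lt (by omega)]
  have htb : t ≤ p - 2 := by omega
  -- a + t' ≠ p
  have hmod : (a + s * a) % p = (a + t') % p := by
    rw [Nat.add_mod, Nat.add_mod a t' p, Nat.mod_eq_of_lt ht'p]
  have han : a + t' ≠ p := by
    intro h
    have hd : p ∣ a + s * a := by
      refine Nat.dvd_of_mod_eq_zero ?_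
      rw [hmod, h, Nat.mod_self]
    rw [show a + s * a = a * (1 + s) by ring] at hd
    rcases (hp.dvd_mul).mp hd with h' | h'
    · exact hpa h'
    · exact absurd (Nat.le_of_dvd (by omega) h') (by omega)
  -- Lucas' theorem step
  have hdvd : p ∣ (a + s * a).choose a ↔ p ≤ a + t' := by
    have lucas := Choose.choose_modEq_choose_mod_mul_choose_div_nat
      (p := p) (n := a + s * a) (k := a)
    rw [Nat.mod_eq_of_lt hap, Nat.div_eq_of_lt hap, Nat.choose_zero_right, mul_one] at lucas
    have hcast : ((a + s * a).choose a : ZMod p) = (((a + s * a) % p).choose a : ZMod p) :=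
      (ZMod.natCast_eq_natCast_iff _ _ _).mpr lucas
    rw [← ZMod.natCast_eq_zero_iff, hcast, hmod]
    by_cases h : a + t' < p
    · rw [Nat.mod_eq_of_lt h]
      constructor
      · intro h0
        exact absurd ((ZMod.natCast_eq_zero_iff _ _).mp h0)
          (aux_not_dvd_choose p h (by omega))
      · omega
    · have h2 : (a + t') % p = a + t' - p := by
        rw [Nat.mod_eq_sub_mod (by omega), Nat.mod_eq_of_lt (by omega)]
      rw [h2, Nat.choose_eq_zero_of_lt (by omega)]
      simp only [Nat.cast_zero, true_iff]
      omega
  -- Step 1 : evaluate bPoly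
  set c : ZMod p := -(1 : ZMod p) / (s : ZMod p) with hcdef
  have hsne : ((s : ZMod p)) ≠ 0 := by
    rw [Ne, ZMod.natCast_eq_zero_iff]; exact hps
  have hcne : c ≠ 0 := by
    rw [hcdef]
    exact div_ne_zero (by simp) hsne
  have hs1ne : ((1 : ZMod p) - c) ≠ 0 := by
    rw [hcdef]
    have h1 : (1 : ZMod p) - -1 / (s : ZMod p) = ((s + 1 : ℕ) : ZMod p) / (s : ZMod p) := by
      push_cast
      field_simp
      ring
    rw [h1]
    refine div_ne_zero ?_ hsne
    rw [Ne, ZMod.natCast_eq_zero_iff]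
    intro h
    exact absurd (Nat.le_of_dvd (by omega) h) (by omega)
  have heq1 : (bPoly p 1 s).eval (a : ZMod p)
      = ∑ k ∈ Finset.range p,
          c ^ k * ((a - 1).choose (p - 1 - k) : ZMod p) * ((t.choose k : ZMod p)) := by
    unfold bPoly
    rw [Polynomial.eval_finset_sum]
    refine Finset.sum_congr rfl fun k hk => ?_
    rw [Finset.mem_range] at hk
    have hdp : ∀ (m : ℕ) (q : Polynomial (ZMod p)),
        Polynomial.eval (a : ZMod p) (Polynomial.eval q (descPochhammer (Polynomial (ZMod p)) m))
          = Polynomial.eval (Polynomial.eval (a : ZMod p) q) (descPochhammer (ZMod p) m) := by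
      intro m q
      rw [← descPochhammer_map (Polynomial.C : ZMod p →+* Polynomial (ZMod p)) m,
        Polynomial.eval_map]
      rw [show Polynomial.eval₂ Polynomial.C q (descPochhammer (ZMod p) m)
          = (descPochhammer (ZMod p) m).comp q from rfl, Polynomial.eval_comp]
    rw [Polynomial.eval_mul, Polynomial.eval_mul, Polynomial.eval_C, hdp, hdp]
    have e1 : Polynomial.eval (a : ZMod p)
        (Polynomial.C ((1 : ℕ) : ZMod p) * Polynomial.X - 1) = ((a - 1 : ℕ) : ZMod p) := by
      rw [Nat.cast_sub ha0]
      simp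
    have e2 : Polynomial.eval (a : ZMod p)
        (Polynomial.C ((s : ℕ) : ZMod p) * Polynomial.X - 1) = ((t : ℕ) : ZMod p) := by
      have : ((t : ℕ) : ZMod p) = ((s * a - 1 : ℕ) : ZMod p) := by
        rw [← htt, ZMod.natCast_mod]
      rw [this, Nat.cast_sub hsa1]
      push_cast
      simp
    rw [e1, e2, descPochhammer_eval_eq_descFactorial, descPochhammer_eval_eq_descFactorial,
      Nat.descFactorial_eq_factorial_mul_choose, Nat.descFactorial_eq_factorial_mul_choose]
    have hf1 : (((p - 1 - k).factorial : ZMod p)) ≠ 0 := aux_fact_ne_zero p (by omega)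
    have hf2 : ((k.factorial : ZMod p)) ≠ 0 := aux_fact_ne_zero p (by omega)
    have hss : ((s : ZMod p))⁻¹ ^ k * (s : ZMod p) ^ k = 1 := by
      rw [← mul_pow, inv_mul_cancel₀ hsne, one_pow]
    push_cast
    field_simp
    rw [hcdef]; ring
  -- restrict the sum
  have heq2 : ∑ k ∈ Finset.range p,
        c ^ k * ((a - 1).choose (p - 1 - k) : ZMod p) * ((t.choose k : ZMod p))
      = ∑ k ∈ Finset.range (t + 1),
          c ^ k * ((a - 1).choose (p - 1 - k) : ZMod p) * ((t.choose k : ZMod p)) := by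
    refine (Finset.sum_subset (Finset.range_subset_range.mpr (by omega)) ?_).symm
    intro k _ hk
    rw [Finset.mem_range, not_lt] at hk
    rw [Nat.choose_eq_zero_of_lt (show t < k by omega), Nat.cast_zero, mul_zero]
  set S : ZMod p := ∑ k ∈ Finset.range (t + 1),
      c ^ k * ((a - 1).choose (p - 1 - k) : ZMod p) * ((t.choose k : ZMod p)) with hSdef
  -- the key sum T
  set T : ZMod p := ∑ x : ZMod p, (1 + x) ^ (a - 1) * (1 + c * x) ^ t with hTdef
  -- T = -S
  have hTS : T = -S := by
    rw [hTdef]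
    have expand : ∀ x : ZMod p, (1 + x) ^ (a - 1) * (1 + c * x) ^ t
        = ∑ i ∈ Finset.range a, ∑ j ∈ Finset.range (t + 1),
            ((a - 1).choose i : ZMod p) * ((t.choose j : ZMod p) * c ^ j) * x ^ (i + j) := by
      intro x
      rw [show (1 + x : ZMod p) = 1 + 1 * x by ring, aux_expand, aux_expand,
        show a - 1 + 1 = a from by omega, Finset.sum_mul_sum]
      refine Finset.sum_congr rfl fun i _ => Finset.sum_congr rfl fun j _ => ?_
      rw [one_pow, one_pow, one_pow, pow_add]
      ring
    rw [Finset.sum_congr rfl fun x _ => expand x]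
    rw [Finset.sum_comm]
    have step1 : ∀ i ∈ Finset.range a,
        (∑ x : ZMod p, ∑ j ∈ Finset.range (t + 1),
          ((a - 1).choose i : ZMod p) * ((t.choose j : ZMod p) * c ^ j) * x ^ (i + j))
        = ∑ j ∈ Finset.range (t + 1),
            ((a - 1).choose i : ZMod p) * ((t.choose j : ZMod p) * c ^ j)
              * (if i + j = p - 1 then (-1 : ZMod p) else 0) := by
      intro i hi
      rw [Finset.mem_range] at hi
      rw [Finset.sum_comm]
      refine Finset.sum_congr rfl fun j hj => ?_
      rw [Finset.mem_range] at hj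
      rw [← Finset.mul_sum, aux_sum_pow p (by omega)]
    rw [Finset.sum_congr rfl step1, Finset.sum_comm]
    rw [hSdef, ← Finset.sum_neg_distrib]
    refine Finset.sum_congr rfl fun j hj => ?_
    rw [Finset.mem_range] at hj
    have step2 : ∀ i ∈ Finset.range a,
        ((a - 1).choose i : ZMod p) * ((t.choose j : ZMod p) * c ^ j)
            * (if i + j = p - 1 then (-1 : ZMod p) else 0)
        = if i = p - 1 - j then
            ((a - 1).choose i : ZMod p) * ((t.choose j : ZMod p) * c ^ j) * (-1) else 0 := by
      intro i hi
      rw [Finset.mem_range] at hi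
      by_cases h : i + j = p - 1
      · rw [if_pos h, if_pos (by omega)]
      · rw [if_neg h, if_neg (by omega), mul_zero]
    rw [Finset.sum_congr rfl step2, Finset.sum_ite_eq' (Finset.range a) (p - 1 - j)]
    by_cases h : p - 1 - j ∈ Finset.range a
    · rw [if_pos h]; ring
    · rw [if_neg h]
      rw [Finset.mem_range, not_lt] at h
      rw [Nat.choose_eq_zero_of_lt (by omega), Nat.cast_zero]
      ring
  -- T closed form
  have hTval : T = if p - a ≤ t then
      -(((t.choose (p - a) : ZMod p)) * c ^ (p - a) * (1 - c) ^ (t - (p - a))) else 0 := by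
    rw [hTdef]
    have hsub : ∑ x : ZMod p, (1 + x) ^ (a - 1) * (1 + c * x) ^ t
        = ∑ y : ZMod p, y ^ (a - 1) * ((1 - c) + c * y) ^ t := by
      refine Fintype.sum_equiv (Equiv.addRight (1 : ZMod p)) _ _ fun x => ?_
      simp only [Equiv.coe_addRight]
      rw [show (1 : ZMod p) + x = x + 1 by ring,
        show (1 : ZMod p) - c + c * (x + 1) = 1 + c * x by ring]
    rw [hsub]
    have expand : ∀ y : ZMod p, y ^ (a - 1) * ((1 - c) + c * y) ^ t
        = ∑ j ∈ Finset.range (t + 1),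
            (t.choose j : ZMod p) * c ^ j * (1 - c) ^ (t - j) * y ^ (a - 1 + j) := by
      intro y
      rw [aux_expand, Finset.mul_sum]
      refine Finset.sum_congr rfl fun j _ => ?_
      rw [pow_add]
      ring
    rw [Finset.sum_congr rfl fun y _ => expand y, Finset.sum_comm]
    have step1 : ∀ j ∈ Finset.range (t + 1),
        (∑ y : ZMod p, (t.choose j : ZMod p) * c ^ j * (1 - c) ^ (t - j) * y ^ (a - 1 + j))
        = if j = p - a then
            -((t.choose j : ZMod p) * c ^ j * (1 - c) ^ (t - j)) else 0 := by
      intro j hj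
      rw [Finset.mem_range] at hj
      rw [← Finset.mul_sum, aux_sum_pow p (by omega)]
      by_cases h : a - 1 + j = p - 1
      · rw [if_pos h, if_pos (by omega)]; ring
      · rw [if_neg h, if_neg (by omega), mul_zero]
    rw [Finset.sum_congr rfl step1, Finset.sum_ite_eq' (Finset.range (t + 1)) (p - a)]
    simp only [Finset.mem_range]
    by_cases h : p - a ≤ t
    · rw [if_pos (show p - a < t + 1 by omega), if_pos h]
    · rw [if_neg (show ¬ p - a < t + 1 by omega), if_neg h]
  -- conclude
  rw [heq1, heq2, show S = -T by rw [hTS]; ring, hTval, hdvd]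
  by_cases h : p - a ≤ t
  · rw [if_pos h, neg_neg]
    have hX : ((t.choose (p - a) : ZMod p)) * c ^ (p - a) * (1 - c) ^ (t - (p - a)) ≠ 0 :=
      mul_ne_zero (mul_ne_zero (aux_choose_ne_zero p (by omega) h) (pow_ne_zero _ hcne))
        (pow_ne_zero _ hs1ne)
    simp only [hX, false_iff, not_not]
    omega
  · rw [if_neg h, neg_zero]
    simp only [eq_self_iff_true, true_iff]
    omega
end

section
/- Let p be an odd prime and let s be an integer with 0 < s < p−1. Then the polynomial identity b_{1,s}(α) = b_{1,p−1−s}(α) holds in F_p[α]. -/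
open Polynomial Finset

section Aux

variable {p : ℕ} [hp : Fact p.Prime]

lemma auxFactNe {k : ℕ} (hk : k < p) : ((k.factorial : ℕ) : ZMod p) ≠ 0 := by
  rw [Ne, ZMod.natCast_eq_zero_iff]
  intro h
  exact absurd ((Nat.Prime.dvd_factorial hp.out).mp h) (by omega)

lemma auxChooseCast (n k : ℕ) :
    ((n.choose k : ℕ) : ZMod p) * ((k.factorial : ℕ) : ZMod p) =
      (descPochhammer (ZMod p) k).eval (n : ZMod p) := by
  rw [descPochhammer_eval_eq_descFactorial, Nat.descFactorial_eq_factorial_mul_choose]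
  push_cast
  ring

lemma auxChooseEq {n n' : ℕ} (h : (n : ZMod p) = (n' : ZMod p)) {k : ℕ} (hk : k < p) :
    ((n.choose k : ℕ) : ZMod p) = ((n'.choose k : ℕ) : ZMod p) := by
  have h1 := auxChooseCast (p := p) n k
  have h2 := auxChooseCast (p := p) n' k
  rw [h] at h1
  exact mul_right_cancel₀ (auxFactNe hk) (h1.trans h2.symm)

lemma auxDescProd (x : ZMod p) (n : ℕ) :
    (descPochhammer (ZMod p) n).eval x = ∏ i ∈ range n, (x - i) := by
  induction n with
  | zero => simp
  | succ n ih =>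
    rw [descPochhammer_succ_right, eval_mul, ih, prod_range_succ, eval_sub, eval_X, eval_natCast]

lemma auxFlip (a E d : ℕ) (hd : d < p) (hE : (E : ZMod p) = (d : ZMod p) - a - 1) :
    ((E.choose d : ℕ) : ZMod p) = (-1) ^ d * ((a.choose d : ℕ) : ZMod p) := by
  have h1 := auxChooseCast (p := p) E d
  have h2 := auxChooseCast (p := p) a d
  have key : (descPochhammer (ZMod p) d).eval (E : ZMod p)
      = (-1) ^ d * (descPochhammer (ZMod p) d).eval (a : ZMod p) := by
    rw [auxDescProd, auxDescProd, hE]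
    have := Finset.prod_range_reflect (fun i => ((d : ZMod p) - a - 1 - i)) d
    rw [← this]
    have step : ∀ j ∈ range d, ((d : ZMod p) - a - 1 - ((d - 1 - j : ℕ) : ZMod p))
        = (-1) * ((a : ZMod p) - j) := by
      intro j hj
      have hj' := mem_range.mp hj
      have hc : ((d - 1 - j : ℕ) : ZMod p) = (d : ZMod p) - 1 - j := by
        have h1 : d - 1 - j + (1 + j) = d := by omega
        have := congrArg (fun t : ℕ => (t : ZMod p)) h1
        push_cast at this
        linear_combination this
      rw [hc]
      ring
    rw [Finset.prod_congr rfl step, Finset.prod_mul_distrib, Finset.prod_const,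
      Finset.card_range]
  rw [key, ← h2] at h1
  have h3 : ((E.choose d : ℕ) : ZMod p) * ((d.factorial : ℕ) : ZMod p)
      = ((-1) ^ d * ((a.choose d : ℕ) : ZMod p)) * ((d.factorial : ℕ) : ZMod p) := by
    rw [h1]; ring
  exact mul_right_cancel₀ (auxFactNe hd) h3


noncomputable def auxF (p : ℕ) (μ : ZMod p) (n : ℕ) : Polynomial (ZMod p) :=
  (1 + Polynomial.C μ * Polynomial.X) ^ n

lemma auxF_coeff (μ : ZMod p) (n k : ℕ) :
    (auxF p μ n).coeff k = (n.choose k : ZMod p) * μ ^ k := by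
  rw [auxF, add_comm, add_pow, finset_sum_coeff]
  have step : ∀ j ∈ range (n + 1),
      ((Polynomial.C μ * Polynomial.X) ^ j * 1 ^ (n - j) * (n.choose j : Polynomial (ZMod p))).coeff k
        = if j = k then (n.choose k : ZMod p) * μ ^ k else 0 := by
    intro j hj
    rw [one_pow, mul_one, mul_pow, ← C_pow, ← Polynomial.C_eq_natCast]
    have hmono : Polynomial.C (μ ^ j) * Polynomial.X ^ j * Polynomial.C ((n.choose j : ZMod p))
        = Polynomial.monomial j (μ ^ j * (n.choose j : ZMod p)) := by
      rw [← Polynomial.C_mul_X_pow_eq_monomial, Polynomial.C_mul]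
      ring
    rw [hmono, Polynomial.coeff_monomial]
    by_cases hjk : j = k
    · subst hjk; simp [mul_comm]
    · rw [if_neg hjk, if_neg hjk]
  rw [Finset.sum_congr rfl step, Finset.sum_ite_eq' (range (n + 1)) k]
  by_cases hk : k ∈ range (n + 1)
  · rw [if_pos hk]
  · rw [if_neg hk, Nat.choose_eq_zero_of_lt (by simpa using hk), Nat.cast_zero, zero_mul]

noncomputable def auxS (p : ℕ) (μ ν : ZMod p) (M N d : ℕ) : ZMod p :=
  ((auxF p μ M) * (auxF p ν N)).coeff d

lemma auxS_eq_sum (μ ν : ZMod p) (M N d : ℕ) :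
    auxS p μ ν M N d
      = ∑ ij ∈ Finset.HasAntidiagonal.antidiagonal d,
          (M.choose ij.1 : ZMod p) * μ ^ ij.1 * ((N.choose ij.2 : ZMod p) * ν ^ ij.2) := by
  rw [auxS, coeff_mul]
  exact Finset.sum_congr rfl fun ij _ => by rw [auxF_coeff, auxF_coeff]

lemma auxS_eq_range (μ ν : ZMod p) (M N d : ℕ) :
    auxS p μ ν M N d
      = ∑ k ∈ range (d + 1),
          (M.choose k : ZMod p) * μ ^ k * ((N.choose (d - k) : ZMod p) * ν ^ (d - k)) := by
  rw [auxS_eq_sum, Finset.Nat.sum_antidiagonal_eq_sum_range_succ_mk]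


lemma auxScale (κ μ ν : ZMod p) (hκ : κ ≠ 0) (M N : ℕ) :
    auxS p (κ * μ) (κ * ν) M N (p - 1) = auxS p μ ν M N (p - 1) := by
  rw [auxS_eq_sum, auxS_eq_sum]
  refine Finset.sum_congr rfl fun ij hij => ?_
  have hsum : ij.1 + ij.2 = p - 1 := Finset.HasAntidiagonal.mem_antidiagonal.mp hij
  have : κ ^ ij.1 * κ ^ ij.2 = 1 := by
    rw [← pow_add, hsum, ZMod.pow_card_sub_one_eq_one hκ]
  rw [mul_pow, mul_pow]
  calc (M.choose ij.1 : ZMod p) * (κ ^ ij.1 * μ ^ ij.1)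
        * ((N.choose ij.2 : ZMod p) * (κ ^ ij.2 * ν ^ ij.2))
      = (κ ^ ij.1 * κ ^ ij.2) * ((M.choose ij.1 : ZMod p) * μ ^ ij.1
          * ((N.choose ij.2 : ZMod p) * ν ^ ij.2)) := by ring
    _ = _ := by rw [this, one_mul]

lemma auxRep (μ ν : ZMod p) {M M' N N' d : ℕ} (hd : d < p)
    (hM : (M : ZMod p) = (M' : ZMod p)) (hN : (N : ZMod p) = (N' : ZMod p)) :
    auxS p μ ν M N d = auxS p μ ν M' N' d := by
  rw [auxS_eq_sum, auxS_eq_sum]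
  refine Finset.sum_congr rfl fun ij hij => ?_
  have hsum : ij.1 + ij.2 = d := Finset.HasAntidiagonal.mem_antidiagonal.mp hij
  rw [auxChooseEq hM (by omega), auxChooseEq hN (by omega)]

lemma auxGeom (lam : ZMod p) (hl : lam ≠ 1) : ∑ j ∈ range p, lam ^ j = 1 := by
  have h := geom_sum_mul lam p
  rw [ZMod.pow_card] at h
  have h2 : (∑ i ∈ range p, lam ^ i) * (lam - 1) = 1 * (lam - 1) := by rw [h, one_mul]
  exact mul_right_cancel₀ (sub_ne_zero.mpr hl) h2

lemma auxInner (b e t : ℕ) (ht : t ≤ b) (htp : t < p) :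
    ∑ k ∈ range p, b.choose k * k.choose t * e.choose (p - 1 - k)
      = b.choose t * (b - t + e).choose (p - 1 - t) := by
  have h1 : ∑ k ∈ range p, b.choose k * k.choose t * e.choose (p - 1 - k)
      = ∑ k ∈ Finset.Ico t p, b.choose k * k.choose t * e.choose (p - 1 - k) := by
    refine (Finset.sum_subset (by intro k hk; simp at hk ⊢; omega) ?_).symm
    intro k hk1 hk2
    simp only [Finset.mem_range] at hk1
    simp only [Finset.mem_Ico] at hk2
    have : k < t := by omega
    rw [Nat.choose_eq_zero_of_lt this, Nat.mul_zero, Nat.zero_mul]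
  rw [h1, Finset.sum_Ico_eq_sum_range]
  have h2 : ∀ j ∈ range (p - t), b.choose (t + j) * (t + j).choose t * e.choose (p - 1 - (t + j))
      = b.choose t * ((b - t).choose j * e.choose (p - 1 - t - j)) := by
    intro j hj
    have hrw : p - 1 - (t + j) = p - 1 - t - j := by omega
    rw [hrw]
    by_cases hle : t + j ≤ b
    · have := Nat.choose_mul (n := b) (Nat.le_add_right t j)
      rw [Nat.add_sub_cancel_left] at this
      rw [this]
      ring
    · rw [Nat.choose_eq_zero_of_lt (show b < t + j by omega),
        Nat.choose_eq_zero_of_lt (show b - t < j by omega)]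
      ring
  rw [Finset.sum_congr rfl h2, ← Finset.mul_sum]
  congr 1
  rw [Nat.add_choose_eq, Finset.Nat.sum_antidiagonal_eq_sum_range_succ_mk]
  have hpt : (p - 1 - t).succ = p - t := by omega
  rw [hpt]


lemma auxPowExpand (lam : ZMod p) {k : ℕ} (hk : k < p) :
    (1 - lam) ^ k = ∑ t ∈ range p, (k.choose t : ZMod p) * (-lam) ^ t := by
  rw [sub_eq_add_neg, add_comm, add_pow]
  have h := Finset.sum_subset (Finset.range_subset_range.mpr (by omega : k + 1 ≤ p))
    (f := fun t => (-lam) ^ t * 1 ^ (k - t) * (k.choose t : ZMod p))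
    (by intro t ht1 ht2
        simp only [Finset.mem_range] at ht1 ht2
        simp only [Nat.choose_eq_zero_of_lt (by omega : k < t), Nat.cast_zero, mul_zero])
  rw [h]
  exact Finset.sum_congr rfl fun t _ => by simp only [one_pow, mul_one]; rw [mul_comm]

lemma auxTR (hodd : Odd p) (lam : ZMod p) (a b e : ℕ)
    (he : (e : ZMod p) = -(a : ZMod p) - (b : ZMod p) - 2) :
    auxS p 1 lam a b (p - 1) = auxS p (1 - lam) 1 b e (p - 1) := by
  have hppos : 0 < p := hp.out.pos
  have hp1 : p - 1 + 1 = p := by omega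
  have heven : Even (p - 1) := Nat.Odd.sub_odd hodd odd_one
  rw [auxS_eq_range, auxS_eq_range, hp1]
  -- reflected LHS
  have hL : ∑ k ∈ range p, (a.choose k : ZMod p) * 1 ^ k
        * ((b.choose (p - 1 - k) : ZMod p) * lam ^ (p - 1 - k))
      = ∑ t ∈ range p, (a.choose (p - 1 - t) : ZMod p) * (b.choose t : ZMod p) * lam ^ t := by
    rw [← Finset.sum_range_reflect
      (fun t => (a.choose (p - 1 - t) : ZMod p) * (b.choose t : ZMod p) * lam ^ t) p]
    refine Finset.sum_congr rfl fun k hk => ?_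
    have hk' := Finset.mem_range.mp hk
    have h1 : p - 1 - (p - 1 - k) = k := by omega
    simp only [h1, one_pow, mul_one]
    ring
  rw [hL]
  -- expand RHS
  have hR : ∑ k ∈ range p, (b.choose k : ZMod p) * (1 - lam) ^ k
        * ((e.choose (p - 1 - k) : ZMod p) * 1 ^ (p - 1 - k))
      = ∑ t ∈ range p, (-lam) ^ t
          * ((∑ k ∈ range p, b.choose k * k.choose t * e.choose (p - 1 - k) : ℕ) : ZMod p) := by
    have step1 : ∀ k ∈ range p, (b.choose k : ZMod p) * (1 - lam) ^ k
        * ((e.choose (p - 1 - k) : ZMod p) * 1 ^ (p - 1 - k))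
        = ∑ t ∈ range p, (-lam) ^ t
            * ((b.choose k : ZMod p) * (k.choose t : ZMod p) * (e.choose (p - 1 - k) : ZMod p)) := by
      intro k hk
      rw [auxPowExpand lam (Finset.mem_range.mp hk), one_pow, mul_one, Finset.mul_sum,
        Finset.sum_mul]
      exact Finset.sum_congr rfl fun t _ => by ring
    rw [Finset.sum_congr rfl step1, Finset.sum_comm]
    refine Finset.sum_congr rfl fun t _ => ?_
    rw [← Finset.mul_sum]
    congr 1
    push_cast
    exact Finset.sum_congr rfl fun k _ => by ring
  rw [hR]
  -- pointwise identity
  refine Finset.sum_congr rfl fun t ht => ?_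
  have ht' := Finset.mem_range.mp ht
  by_cases hbt : t ≤ b
  · rw [auxInner b e t hbt ht']
    set d := p - 1 - t with hd_def
    set E := b - t + e with hE_def
    have hd : d < p := by omega
    have hdcast : (d : ZMod p) = -1 - (t : ZMod p) := by
      have h0 : ((t + d + 1 : ℕ) : ZMod p) = ((p : ℕ) : ZMod p) := by congr 1; omega
      push_cast at h0
      rw [ZMod.natCast_self] at h0
      linear_combination h0
    have hE : (E : ZMod p) = (d : ZMod p) - a - 1 := by
      have hbtc : ((b - t : ℕ) : ZMod p) = (b : ZMod p) - (t : ZMod p) := by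
        rw [Nat.cast_sub hbt]
      rw [hE_def, Nat.cast_add, hbtc, he, hdcast]
      ring
    rw [Nat.cast_mul, auxFlip a E d hd hE]
    have hsign : ((-1 : ZMod p)) ^ t * (-1) ^ d = 1 := by
      rw [← pow_add, show t + d = p - 1 by omega]
      exact Even.neg_one_pow heven
    have hfin : (-lam) ^ t * ((b.choose t : ZMod p) * ((-1) ^ d * (a.choose d : ZMod p)))
        = (a.choose d : ZMod p) * (b.choose t : ZMod p) * lam ^ t := by
      rw [neg_pow]
      linear_combination ((a.choose d : ZMod p) * (b.choose t : ZMod p) * lam ^ t) * hsign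
    exact hfin.symm
  · push_neg at hbt
    have hzero : (∑ k ∈ range p, b.choose k * k.choose t * e.choose (p - 1 - k) : ℕ) = 0 := by
      refine Finset.sum_eq_zero fun k _ => ?_
      rcases le_or_gt k b with h | h
      · rw [Nat.choose_eq_zero_of_lt (by omega : k < t), Nat.mul_zero, Nat.zero_mul]
      · rw [Nat.choose_eq_zero_of_lt h, Nat.zero_mul, Nat.zero_mul]
    rw [hzero, Nat.choose_eq_zero_of_lt hbt]
    simp


lemma auxGcoeff (σ τ : ZMod p) (m n : ℕ)
    (hA : σ * ((m + 1 : ℕ) : ZMod p) + τ * ((n + 1 : ℕ) : ZMod p) = 0)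
    (hB : σ * τ * (((m + 1 : ℕ) : ZMod p) + ((n + 1 : ℕ) : ZMod p)) ≠ 0) :
    (auxF p σ m * auxF p τ n).coeff (p - 2) = 0 := by
  have hp2 : 2 ≤ p := hp.out.two_le
  set G := auxF p σ m * auxF p τ n with hG
  set A := σ * ((m + 1 : ℕ) : ZMod p) + τ * ((n + 1 : ℕ) : ZMod p) with hA_def
  set B := σ * τ * (((m + 1 : ℕ) : ZMod p) + ((n + 1 : ℕ) : ZMod p)) with hB_def
  have key : derivative (auxF p σ (m + 1) * auxF p τ (n + 1))
      = G * (Polynomial.C A + Polynomial.C B * Polynomial.X) := by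
    rw [derivative_mul]
    rw [show auxF p σ (m + 1) = (1 + Polynomial.C σ * Polynomial.X) ^ (m + 1) from rfl,
      show auxF p τ (n + 1) = (1 + Polynomial.C τ * Polynomial.X) ^ (n + 1) from rfl,
      derivative_pow_succ, derivative_pow_succ]
    have hds : derivative (1 + Polynomial.C σ * Polynomial.X) = Polynomial.C σ := by
      simp
    have hdt : derivative (1 + Polynomial.C τ * Polynomial.X) = Polynomial.C τ := by
      simp
    rw [hds, hdt, hG]
    rw [show auxF p σ m = (1 + Polynomial.C σ * Polynomial.X) ^ m from rfl,
      show auxF p τ n = (1 + Polynomial.C τ * Polynomial.X) ^ n from rfl]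
    rw [pow_succ (1 + Polynomial.C σ * Polynomial.X), pow_succ (1 + Polynomial.C τ * Polynomial.X)]
    rw [hA_def, hB_def]
    push_cast
    simp only [Polynomial.C_add, Polynomial.C_mul, Polynomial.C_1]
    ring
  have hzero : (derivative (auxF p σ (m + 1) * auxF p τ (n + 1))).coeff (p - 2 + 1) = 0 := by
    rw [coeff_derivative]
    have : ((p - 2 + 1 + 1 : ℕ) : ZMod p) = 0 := by
      rw [show p - 2 + 1 + 1 = p by omega, ZMod.natCast_self]
    push_cast at this ⊢
    rw [this, mul_zero]
  rw [key] at hzero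
  have hexp : (G * (Polynomial.C A + Polynomial.C B * Polynomial.X)).coeff (p - 2 + 1)
      = G.coeff (p - 2 + 1) * A + G.coeff (p - 2) * B := by
    rw [mul_add, Polynomial.coeff_add, Polynomial.coeff_mul_C, ← mul_assoc,
      Polynomial.coeff_mul_X, Polynomial.coeff_mul_C]
  rw [hexp, hA, mul_zero, zero_add] at hzero
  exact (mul_eq_zero.mp hzero).resolve_right hB


lemma auxEvalDesc (r : ZMod p) (m : ℕ) (x : ZMod p) :
    Polynomial.eval x (Polynomial.eval (Polynomial.C r * Polynomial.X - 1)
        (descPochhammer (Polynomial (ZMod p)) m))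
      = (descPochhammer (ZMod p) m).eval (r * x - 1) := by
  rw [← descPochhammer_map (Polynomial.C : ZMod p →+* Polynomial (ZMod p)) m, eval_map]
  have hcomp : eval₂ (Polynomial.C : ZMod p →+* Polynomial (ZMod p))
      (Polynomial.C r * Polynomial.X - 1) (descPochhammer (ZMod p) m)
      = (descPochhammer (ZMod p) m).comp (Polynomial.C r * Polynomial.X - 1) := rfl
  rw [hcomp, eval_comp]
  congr 1
  simp

lemma auxBridge (t : ℕ) (x : ZMod p) :
    (bPoly p 1 t).eval x
      = auxS p 1 (-(1 : ZMod p) / (t : ZMod p)) ((x - 1).val)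
          (((t : ZMod p) * x - 1).val) (p - 1) := by
  have hppos : 0 < p := hp.out.pos
  have hp1 : p - 1 + 1 = p := by omega
  set lam := -(1 : ZMod p) / (t : ZMod p) with hlam
  set a := (x - 1).val with ha_def
  set b := ((t : ZMod p) * x - 1).val with hb_def
  have ha : ((a : ℕ) : ZMod p) = x - 1 := by rw [ha_def, ZMod.natCast_val, ZMod.cast_id]
  have hb : ((b : ℕ) : ZMod p) = (t : ZMod p) * x - 1 := by
    rw [hb_def, ZMod.natCast_val, ZMod.cast_id]
  rw [auxS_eq_range, hp1]
  have hR : ∑ k ∈ range p, (a.choose k : ZMod p) * 1 ^ k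
        * ((b.choose (p - 1 - k) : ZMod p) * lam ^ (p - 1 - k))
      = ∑ k ∈ range p, (a.choose (p - 1 - k) : ZMod p) * (b.choose k : ZMod p) * lam ^ k := by
    rw [← Finset.sum_range_reflect
      (fun k => (a.choose (p - 1 - k) : ZMod p) * (b.choose k : ZMod p) * lam ^ k) p]
    refine Finset.sum_congr rfl fun k hk => ?_
    have hk' := Finset.mem_range.mp hk
    have h1 : p - 1 - (p - 1 - k) = k := by omega
    simp only [h1, one_pow, mul_one]
    ring
  rw [hR, bPoly, eval_finset_sum]
  refine Finset.sum_congr rfl fun k hk => ?_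
  have hk' := Finset.mem_range.mp hk
  rw [eval_mul, eval_mul, eval_C, auxEvalDesc, auxEvalDesc]
  rw [Nat.cast_one, one_mul]
  rw [← ha, ← hb]
  rw [← auxChooseCast a (p - 1 - k), ← auxChooseCast b k]
  have hf1 : (((p - 1 - k).factorial : ℕ) : ZMod p) ≠ 0 := auxFactNe (by omega)
  have hf2 : ((k.factorial : ℕ) : ZMod p) ≠ 0 := auxFactNe (by omega)
  rw [div_mul_eq_mul_div, div_mul_eq_mul_div, div_eq_iff (mul_ne_zero hf1 hf2), hlam]
  ring


lemma auxChooseNegOne {N k : ℕ} (hN : (N : ZMod p) = -1) (hk : k < p) :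
    ((N.choose k : ℕ) : ZMod p) = (-1) ^ k := by
  have h1 := auxChooseCast (p := p) N k
  rw [hN, auxDescProd] at h1
  have h2 : ∏ i ∈ range k, ((-1 : ZMod p) - i) = (-1) ^ k * ((k.factorial : ℕ) : ZMod p) := by
    have : ∀ i ∈ range k, ((-1 : ZMod p) - i) = (-1) * ((i : ZMod p) + 1) := by
      intro i _; ring
    rw [Finset.prod_congr rfl this, Finset.prod_mul_distrib, Finset.prod_const,
      Finset.card_range]
    congr 1
    rw [← Finset.prod_range_add_one_eq_factorial k]
    push_cast
    rfl
  rw [h2] at h1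
  exact mul_right_cancel₀ (auxFactNe hk) h1

lemma auxEvalZero (hodd : Odd p) (t : ℕ) (h0 : (t : ZMod p) ≠ 0)
    (h1 : (t : ZMod p) + 1 ≠ 0) : (bPoly p 1 t).eval 0 = 1 := by
  have hppos : 0 < p := hp.out.pos
  have hp1 : p - 1 + 1 = p := by omega
  have heven : Even (p - 1) := Nat.Odd.sub_odd hodd odd_one
  set lam := -(1 : ZMod p) / (t : ZMod p) with hlam
  have hlam1 : lam ≠ 1 := by
    intro hcon
    rw [hlam, div_eq_iff h0, one_mul] at hcon
    exact h1 (by rw [← hcon]; ring)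
  rw [auxBridge t 0, auxS_eq_range, hp1]
  have ha : ((((0 : ZMod p) - 1).val : ℕ) : ZMod p) = -1 := by
    rw [ZMod.natCast_val, ZMod.cast_id]; ring
  have hb : ((((t : ZMod p) * 0 - 1).val : ℕ) : ZMod p) = -1 := by
    rw [ZMod.natCast_val, ZMod.cast_id]; ring
  have hterm : ∀ k ∈ range p,
      ((((0 : ZMod p) - 1).val.choose k : ℕ) : ZMod p) * 1 ^ k
        * (((((t : ZMod p) * 0 - 1).val.choose (p - 1 - k) : ℕ) : ZMod p) * lam ^ (p - 1 - k))
      = lam ^ (p - 1 - k) := by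
    intro k hk
    have hk' := Finset.mem_range.mp hk
    rw [auxChooseNegOne ha hk', auxChooseNegOne hb (by omega), one_pow, mul_one]
    have hsign : ((-1 : ZMod p)) ^ k * (-1) ^ (p - 1 - k) = 1 := by
      rw [← pow_add, show k + (p - 1 - k) = p - 1 by omega]
      exact Even.neg_one_pow heven
    calc (-1 : ZMod p) ^ k * ((-1) ^ (p - 1 - k) * lam ^ (p - 1 - k))
        = ((-1 : ZMod p) ^ k * (-1) ^ (p - 1 - k)) * lam ^ (p - 1 - k) := by ring
      _ = lam ^ (p - 1 - k) := by rw [hsign, one_mul]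
  rw [Finset.sum_congr rfl hterm]
  rw [show ∑ k ∈ range p, lam ^ (p - 1 - k) = ∑ k ∈ range p, lam ^ k from
    Finset.sum_range_reflect (fun k => lam ^ k) p]
  exact auxGeom lam hlam1


lemma auxValCast (y : ZMod p) : ((y.val : ℕ) : ZMod p) = y := by
  rw [ZMod.natCast_val, ZMod.cast_id]

lemma auxDescDegLe (r : ZMod p) (m : ℕ) :
    (Polynomial.eval (Polynomial.C r * Polynomial.X - 1)
      (descPochhammer (Polynomial (ZMod p)) m)).natDegree ≤ m := by
  rw [← descPochhammer_map (Polynomial.C : ZMod p →+* Polynomial (ZMod p)) m, eval_map]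
  have hcomp : eval₂ (Polynomial.C : ZMod p →+* Polynomial (ZMod p))
      (Polynomial.C r * Polynomial.X - 1) (descPochhammer (ZMod p) m)
      = (descPochhammer (ZMod p) m).comp (Polynomial.C r * Polynomial.X - 1) := rfl
  rw [hcomp]
  refine Polynomial.natDegree_comp_le.trans ?_
  have h1 : (Polynomial.C r * Polynomial.X - 1 : Polynomial (ZMod p)).natDegree ≤ 1 := by
    refine (Polynomial.natDegree_sub_le _ _).trans ?_
    simp only [max_le_iff]
    constructor
    · exact (Polynomial.natDegree_C_mul_le r Polynomial.X).trans (by simp)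
    · simp
  calc (descPochhammer (ZMod p) m).natDegree
        * (Polynomial.C r * Polynomial.X - 1 : Polynomial (ZMod p)).natDegree
      ≤ (descPochhammer (ZMod p) m).natDegree * 1 := by
        exact Nat.mul_le_mul_left _ h1
    _ ≤ m := by rw [descPochhammer_natDegree, Nat.mul_one]

lemma auxDeg (t : ℕ) : (bPoly p 1 t).natDegree ≤ p - 1 := by
  rw [bPoly]
  refine Polynomial.natDegree_sum_le_of_forall_le _ _ fun k hk => ?_
  have hk' := Finset.mem_range.mp hk
  refine Polynomial.natDegree_mul_le.trans ?_
  have h1 := Polynomial.natDegree_C_mul_le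
    ((-(1 : ℕ) / (t : ℕ) : ZMod p) ^ k /
      (((p - 1 - k).factorial : ZMod p) * (k.factorial : ZMod p)))
    (Polynomial.eval (Polynomial.C ((1 : ℕ) : ZMod p) * Polynomial.X - 1)
      (descPochhammer (Polynomial (ZMod p)) (p - 1 - k)))
  have h2 := auxDescDegLe (p := p) ((1 : ℕ) : ZMod p) (p - 1 - k)
  have h3 := auxDescDegLe (p := p) ((t : ℕ) : ZMod p) k
  have := add_le_add (h1.trans h2) h3
  refine this.trans ?_
  omega

end Aux

theorem stmt14 (p s : ℕ) [Fact p.Prime] (hodd : Odd p) (hs0 : 0 < s) (hsp : s < p - 1) :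
    bPoly p 1 s = bPoly p 1 (p - 1 - s) := by
  have hprime : p.Prime := Fact.out
  have hp3 : 3 ≤ p := by
    rcases hodd with ⟨j, hj⟩
    have := hprime.two_le
    omega
  set s' := p - 1 - s with hs'_def
  have hs'0 : 0 < s' := by omega
  have hs'p : s' < p - 1 := by omega
  -- cast facts
  have hcast : ∀ u : ℕ, 0 < u → u < p → ((u : ℕ) : ZMod p) ≠ 0 := by
    intro u hu0 hup
    rw [Ne, ZMod.natCast_eq_zero_iff]
    intro hdvd
    have := Nat.le_of_dvd hu0 hdvd
    omega
  have hσ : ((s : ℕ) : ZMod p) ≠ 0 := hcast s hs0 (by omega)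
  have hδ : ((s' : ℕ) : ZMod p) ≠ 0 := hcast s' hs'0 (by omega)
  have hτnat : ((s + 1 : ℕ) : ZMod p) ≠ 0 := hcast (s + 1) (by omega) (by omega)
  have hτ : ((s : ℕ) : ZMod p) + 1 ≠ 0 := by
    intro hcon
    apply hτnat
    push_cast
    exact hcon
  have hsum : ((s' : ℕ) : ZMod p) = -(((s : ℕ) : ZMod p) + 1) := by
    have h0 : ((s' + (s + 1) : ℕ) : ZMod p) = ((p : ℕ) : ZMod p) := by congr 1; omega
    push_cast at h0
    rw [ZMod.natCast_self] at h0
    linear_combination h0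
  -- the difference is zero
  have hzero : bPoly p 1 s - bPoly p 1 s' = 0 := by
    apply Polynomial.eq_zero_of_natDegree_lt_card_of_eval_eq_zero _
      (Function.injective_id (α := ZMod p))
    · intro x
      simp only [id]
      rw [Polynomial.eval_sub, sub_eq_zero]
      by_cases hx : x = 0
      · subst hx
        rw [auxEvalZero hodd s hσ hτ, auxEvalZero hodd s' hδ (by rw [hsum]; intro hcon; apply hσ; linear_combination -hcon)]
      -- main case
      · set σ := ((s : ℕ) : ZMod p) with hσ_def
        set τ := σ + 1 with hτ_def
        set δ := ((s' : ℕ) : ZMod p) with hδ_def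
        have hδτ : δ = -τ := hsum
        have hτ' : τ ≠ 0 := hτ
        set a := (x - 1).val with ha_def
        set n := (σ * x - 1).val with hn_def
        set m := (δ * x - 1).val with hm_def
        set e := (δ * x).val with he_def
        set e' := (σ * x).val with he'_def
        have hna : ((a : ℕ) : ZMod p) = x - 1 := auxValCast _
        have hnn : ((n : ℕ) : ZMod p) = σ * x - 1 := auxValCast _
        have hnm : ((m : ℕ) : ZMod p) = δ * x - 1 := auxValCast _
        have hne : ((e : ℕ) : ZMod p) = δ * x := auxValCast _
        have hne' : ((e' : ℕ) : ZMod p) = σ * x := auxValCast _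
        have hp1 : p - 1 < p := by omega
        -- left chain
        have hL1 : (bPoly p 1 s).eval x = auxS p 1 (-(1 : ZMod p) / σ) a n (p - 1) :=
          auxBridge s x
        have hL2 : auxS p 1 (-(1 : ZMod p) / σ) a n (p - 1)
            = auxS p (1 - -(1 : ZMod p) / σ) 1 n e (p - 1) := by
          refine auxTR hodd _ a n e ?_
          rw [hne, hna, hnn, hδτ, hτ_def]
          ring
        have hL3 : auxS p (1 - -(1 : ZMod p) / σ) 1 n e (p - 1)
            = auxS p τ σ n e (p - 1) := by
          have h1 : σ * (1 - -(1 : ZMod p) / σ) = τ := by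
            field_simp [hτ_def]
            rw [hτ_def]; ring
          have h2 := auxScale σ (1 - -(1 : ZMod p) / σ) 1 hσ n e
          rw [h1, mul_one] at h2
          exact h2.symm
        have hL4 : auxS p τ σ n e (p - 1) = auxS p τ σ n (m + 1) (p - 1) := by
          refine auxRep _ _ hp1 rfl ?_
          rw [hne]
          push_cast
          rw [hnm]
          ring
        -- right chain
        have hR1 : (bPoly p 1 s').eval x = auxS p 1 (-(1 : ZMod p) / δ) a m (p - 1) :=
          auxBridge s' x
        have hR2 : auxS p 1 (-(1 : ZMod p) / δ) a m (p - 1)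
            = auxS p (1 - -(1 : ZMod p) / δ) 1 m e' (p - 1) := by
          refine auxTR hodd _ a m e' ?_
          rw [hne', hna, hnm, hδτ, hτ_def]
          ring
        have hR3 : auxS p (1 - -(1 : ZMod p) / δ) 1 m e' (p - 1)
            = auxS p σ τ m e' (p - 1) := by
          have h1 : τ * (1 - -(1 : ZMod p) / δ) = σ := by
            have hstep : τ / δ = -1 := by
              rw [hδτ, div_neg, div_self hτ']
            calc τ * (1 - -(1 : ZMod p) / δ) = τ + τ / δ := by ring
              _ = τ + -1 := by rw [hstep]
              _ = σ := by rw [hτ_def]; ring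
          have h2 := auxScale τ (1 - -(1 : ZMod p) / δ) 1 hτ' m e'
          rw [h1, mul_one] at h2
          exact h2.symm
        have hR4 : auxS p σ τ m e' (p - 1) = auxS p σ τ m (n + 1) (p - 1) := by
          refine auxRep _ _ hp1 rfl ?_
          rw [hne']
          push_cast
          rw [hnn]
          ring
        -- final comparison
        have hfinal : auxS p τ σ n (m + 1) (p - 1) = auxS p σ τ m (n + 1) (p - 1) := by
          have hG : (auxF p σ m * auxF p τ n).coeff (p - 2) = 0 := by
            refine auxGcoeff σ τ m n ?_ ?_
            · push_cast
              rw [hnm, hnn, hδτ]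
              ring
            · push_cast
              rw [hnm, hnn, hδτ]
              have hend : σ * τ * (-τ * x - 1 + 1 + (σ * x - 1 + 1)) = σ * τ * x * (σ - τ) := by
                ring
              rw [hend, hτ_def, show σ - (σ + 1) = -1 by ring]
              simp only [mul_neg, mul_one, neg_neg, ne_eq, neg_eq_zero]
              exact mul_ne_zero (mul_ne_zero hσ hτ') hx
          have hpoly : auxF p τ n * auxF p σ (m + 1) - auxF p σ m * auxF p τ (n + 1)
              = (auxF p σ m * auxF p τ n) * (Polynomial.C (σ - τ) * Polynomial.X) := by
            rw [show auxF p σ (m + 1)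
                = (1 + Polynomial.C σ * Polynomial.X) ^ (m + 1) from rfl,
              show auxF p τ (n + 1) = (1 + Polynomial.C τ * Polynomial.X) ^ (n + 1) from rfl,
              pow_succ, pow_succ,
              show auxF p σ m = (1 + Polynomial.C σ * Polynomial.X) ^ m from rfl,
              show auxF p τ n = (1 + Polynomial.C τ * Polynomial.X) ^ n from rfl,
              Polynomial.C_sub]
            ring
          have hsub : auxS p τ σ n (m + 1) (p - 1) - auxS p σ τ m (n + 1) (p - 1) = 0 := by
            rw [auxS, auxS, ← Polynomial.coeff_sub, hpoly, ← mul_assoc,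
              show p - 1 = (p - 2) + 1 by omega, Polynomial.coeff_mul_X,
              Polynomial.coeff_mul_C, hG, zero_mul]
          exact sub_eq_zero.mp hsub
        rw [hL1, hL2, hL3, hL4, hR1, hR2, hR3, hR4, hfinal]
    · rw [ZMod.card]
      have h1 := auxDeg (p := p) s
      have h2 := auxDeg (p := p) s'
      have := Polynomial.natDegree_sub_le (bPoly p 1 s) (bPoly p 1 s')
      omega
  have := sub_eq_zero.mp hzero
  exact this
end

section
/- Let p be an odd prime and let r be an integer with 0 < r < p. Then b_{r,p−r}(α) is the zero polynomial of F_p[α]. -/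
open Polynomial Finset

lemma descPochhammer_smeval_eq_eval' {R : Type*} [CommRing R] (x : R) (n : ℕ) :
    (descPochhammer ℤ n).smeval x = (descPochhammer R n).eval x := by
  induction n with
  | zero => simp [descPochhammer_zero, Polynomial.smeval_one]
  | succ n ih =>
      rw [descPochhammer_succ_right, descPochhammer_succ_right, Polynomial.smeval_mul,
        Polynomial.eval_mul, ih, Polynomial.smeval_sub, Polynomial.smeval_X,
        Polynomial.eval_sub, Polynomial.eval_X, Polynomial.smeval_natCast,
        Polynomial.eval_natCast]
      simp

theorem stmt17 (p r : ℕ) [Fact p.Prime] (hodd : Odd p) (hr0 : 0 < r) (hrp : r < p) :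
    bPoly p r (p - r) = 0 := by
  have hp : p.Prime := Fact.out
  have hp2 : 2 ≤ p := hp.two_le
  have hp3 : 3 ≤ p := by
    have hne2 : p ≠ 2 := by
      rintro rfl
      exact absurd hodd (by decide)
    omega
  set s := p - r with hs
  set R := Polynomial (ZMod p)
  set a : R := Polynomial.C (r : ZMod p) * Polynomial.X - 1 with ha
  set b : R := Polynomial.C (s : ZMod p) * Polynomial.X - 1 with hb
  -- basic facts in ZMod p
  have hrne : (r : ZMod p) ≠ 0 := by
    rw [Ne, ZMod.natCast_eq_zero_iff]
    exact fun h => absurd (Nat.le_of_dvd hr0 h) (not_le.mpr hrp)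
  have hsum : (r : ZMod p) + (s : ZMod p) = 0 := by
    rw [← Nat.cast_add, hs, Nat.add_sub_cancel' hrp.le, ZMod.natCast_self]
  have hsval : (s : ZMod p) = -(r : ZMod p) := by linear_combination hsum
  have hratio : -(r : ZMod p) / (s : ZMod p) = 1 := by
    rw [hsval, neg_div_neg_eq, div_self hrne]
  have hfacne : ∀ k : ℕ, k < p → ((k.factorial : ZMod p) ≠ 0) := by
    intro k hk
    rw [Ne, ZMod.natCast_eq_zero_iff]
    rw [hp.dvd_factorial]
    omega
  -- a + b = -2
  have hab : a + b = -2 := by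
    have h0 : a + b = (Polynomial.C (r : ZMod p) + Polynomial.C (s : ZMod p)) *
        Polynomial.X - 2 := by
      rw [ha, hb]; ring
    rw [h0, ← Polynomial.C_add, hsum, Polynomial.C_0, zero_mul, zero_sub]
  -- the Vandermonde sum vanishes
  have hkey : (descPochhammer R (p - 1)).eval (a + b) = 0 := by
    have h1 : p - 1 = (p - 2) + 1 := by omega
    rw [hab, h1, descPochhammer_succ_right, Polynomial.eval_mul, Polynomial.eval_sub,
      Polynomial.eval_X, Polynomial.eval_natCast]
    have : ((p - 2 : ℕ) : R) = (-2 : R) := by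
      have : ((p - 2 : ℕ) : ZMod p) = -2 := by
        have := ZMod.natCast_self p
        push_cast [Nat.cast_sub hp2]
        rw [this]; ring
      rw [← map_natCast (Polynomial.C : ZMod p →+* R), this]
      simp [map_ofNat]
    rw [this]
    ring
  -- rewrite each term of bPoly
  have hterm : ∀ k ∈ Finset.range p,
      Polynomial.C ((-(r : ZMod p) / (s : ZMod p)) ^ k /
          (((p - 1 - k).factorial : ZMod p) * (k.factorial : ZMod p))) *
        Polynomial.eval a (descPochhammer R (p - 1 - k)) *
        Polynomial.eval b (descPochhammer R k)
      = Polynomial.C (((p - 1).factorial : ZMod p)⁻¹) *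
          (((p - 1).choose k : R) *
            ((descPochhammer ℤ k).smeval b * (descPochhammer ℤ (p - 1 - k)).smeval a)) := by
    intro k hk
    rw [Finset.mem_range] at hk
    have hkle : k ≤ p - 1 := by omega
    have hcoef : (-(r : ZMod p) / (s : ZMod p)) ^ k /
          (((p - 1 - k).factorial : ZMod p) * (k.factorial : ZMod p))
        = ((p - 1).factorial : ZMod p)⁻¹ * ((p - 1).choose k : ZMod p) := by
      rw [hratio, one_pow]
      have hfe : ((p - 1).choose k) * k.factorial * (p - 1 - k).factorial
          = (p - 1).factorial := Nat.choose_mul_factorial_mul_factorial hkle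
      have h1 : ((p - 1 - k).factorial : ZMod p) ≠ 0 := hfacne _ (by omega)
      have h2 : ((k.factorial : ZMod p)) ≠ 0 := hfacne _ (by omega)
      have hc2 : ((p - 1).choose k : ZMod p) * (k.factorial : ZMod p) *
          ((p - 1 - k).factorial : ZMod p) = ((p - 1).factorial : ZMod p) := by
        exact_mod_cast congrArg (fun n : ℕ => (n : ZMod p)) hfe
      have h3 : (((p - 1).factorial : ZMod p)) ≠ 0 := hfacne _ (by omega)
      have hcne : ((p - 1).choose k : ZMod p) ≠ 0 := by
        intro h
        rw [h, zero_mul, zero_mul] at hc2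
        exact h3 hc2.symm
      rw [← hc2]
      field_simp
    rw [hcoef, Polynomial.C_mul, descPochhammer_smeval_eq_eval', descPochhammer_smeval_eq_eval']
    have hnc : ((p - 1).choose k : R) = Polynomial.C (((p - 1).choose k : ZMod p)) := by
      rw [← map_natCast (Polynomial.C : ZMod p →+* R)]
    rw [hnc]
    ring
  rw [bPoly, Finset.sum_congr rfl hterm, ← Finset.mul_sum]
  have hrange : p = (p - 1) + 1 := by omega
  have hvdm : ∑ k ∈ Finset.range p,
      (((p - 1).choose k : R) *
        ((descPochhammer ℤ k).smeval b * (descPochhammer ℤ (p - 1 - k)).smeval a))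
      = (descPochhammer ℤ (p - 1)).smeval (b + a) := by
    rw [Ring.descPochhammer_smeval_add (p - 1) (Commute.all b a),
      Finset.Nat.sum_antidiagonal_eq_sum_range_succ
        (fun i j => ((p - 1).choose i : R) *
          ((descPochhammer ℤ i).smeval b * (descPochhammer ℤ j).smeval a)),
      Nat.succ_eq_add_one, ← hrange]
  rw [hvdm, add_comm b a, descPochhammer_smeval_eq_eval', hkey, mul_zero]
end

section
/- Let p be an odd prime and let r, s be integers with 0 < r, s < p and r + s ≠ p. Then the polynomial identity b_{r,s}(α) = ∑_{k=0}^{p−1} (−r/s)^k C(rα−1, p−1−k) C(sα, k) holds in F_p[α]; that is, the defining sum for b_{r,s}(α) is unchanged when C(sα−1, k) is replaced by C(sα, k) in every term. -/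
open Polynomial Finset

/- ===== preliminaries (already checked) ===== -/
lemma descPochhammer_eval_eq_prod {S : Type*} [CommRing S] (n : ℕ) (c : S) :
    (descPochhammer S n).eval c = ∏ i ∈ Finset.range n, (c - i) := by
  induction n with
  | zero => simp
  | succ n ih => rw [descPochhammer_succ_eval, ih, Finset.prod_range_succ]

lemma descPochhammer_zmod (p : ℕ) [Fact p.Prime] :
    descPochhammer (ZMod p) p = X ^ p - X := by
  have hp : p.Prime := Fact.out
  have h2 : 1 < p := hp.one_lt
  have hmonic : (descPochhammer (ZMod p) p).Monic := monic_descPochhammer _ _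
  have hdegX : (X : (ZMod p)[X]).degree < (X ^ p : (ZMod p)[X]).degree := by
    rw [degree_X, degree_X_pow]; exact_mod_cast h2
  have hmonic2 : (X ^ p - X : (ZMod p)[X]).Monic := (monic_X_pow p).sub_of_left hdegX
  have hdeg2 : (X ^ p - X : (ZMod p)[X]).degree = p := by
    rw [degree_sub_eq_left_of_degree_lt hdegX, degree_X_pow]
  have hdeg1 : (descPochhammer (ZMod p) p).degree = p := by
    rw [degree_eq_natDegree hmonic.ne_zero, descPochhammer_natDegree]
  have key : descPochhammer (ZMod p) p - (X ^ p - X) = 0 := by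
    by_cases h0 : descPochhammer (ZMod p) p - (X ^ p - X) = 0
    · exact h0
    refine eq_zero_of_natDegree_lt_card_of_eval_eq_zero (ι := ZMod p) _
      (f := id) Function.injective_id (fun c => ?_) ?_
    · rw [eval_sub, descPochhammer_eval_eq_prod]
      have h1 : ∏ i ∈ Finset.range p, ((id c : ZMod p) - (i : ZMod p)) = 0 := by
        apply Finset.prod_eq_zero (i := (ZMod.val c)) (Finset.mem_range.2 (ZMod.val_lt c))
        have : ((ZMod.val c : ℕ) : ZMod p) = c := ZMod.natCast_rightInverse c
        simp [this]
      rw [h1]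
      simp [ZMod.pow_card]
    · have hlt : (descPochhammer (ZMod p) p - (X ^ p - X)).degree < (p : WithBot ℕ) := by
        rw [← hdeg1]
        exact degree_sub_lt (hdeg1.trans hdeg2.symm) hmonic.ne_zero
          (by rw [hmonic.leadingCoeff, hmonic2.leadingCoeff])
      have hnd : (descPochhammer (ZMod p) p - (X ^ p - X)).natDegree < p :=
        (natDegree_lt_iff_degree_lt h0).2 hlt
      simpa [ZMod.card] using hnd
  exact sub_eq_zero.1 key

lemma desc_p_eval {p : ℕ} [Fact p.Prime] (f : Polynomial (ZMod p)) :
    (descPochhammer (Polynomial (ZMod p)) p).eval f = f ^ p - f := by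
  rw [← descPochhammer_map (C : ZMod p →+* Polynomial (ZMod p)) p, descPochhammer_zmod,
    eval_map]
  simp

lemma desc_p_linear {p : ℕ} [Fact p.Prime] (c : ZMod p) :
    (descPochhammer (Polynomial (ZMod p)) p).eval (C c * X - 1) = C c * (X ^ p - X) := by
  rw [desc_p_eval]
  have h1 : (C c * X - 1 : Polynomial (ZMod p)) ^ p = (C c * X) ^ p - 1 ^ p :=
    sub_pow_char _ _
  rw [h1, mul_pow, ← C_pow, ZMod.pow_card, one_pow]
  ring

/- ===== term definitions ===== -/

noncomputable def dP (p : ℕ) (m : ℕ) (c : ZMod p) : Polynomial (ZMod p) :=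
  (descPochhammer (Polynomial (ZMod p)) m).eval (Polynomial.C c * Polynomial.X - 1)

lemma dP_succ (p m : ℕ) (c : ZMod p) :
    dP p (m + 1) c = dP p m c * ((Polynomial.C c * Polynomial.X - 1) - (m : Polynomial (ZMod p))) :=
  descPochhammer_succ_eval m _

lemma dP_zero (p : ℕ) (c : ZMod p) : dP p 0 c = 1 := by simp [dP]

lemma fact_ne (p : ℕ) [Fact p.Prime] {m : ℕ} (h : m < p) :
    ((m.factorial : ℕ) : ZMod p) ≠ 0 := by
  have hp : p.Prime := Fact.out
  rw [Ne, ZMod.natCast_eq_zero_iff]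
  intro hd
  exact absurd ((Nat.Prime.dvd_factorial hp).1 hd) (by omega)

lemma cast_ne (p : ℕ) [Fact p.Prime] {m : ℕ} (h0 : 0 < m) (h : m < p) :
    ((m : ℕ) : ZMod p) ≠ 0 := by
  have hp : p.Prime := Fact.out
  rw [Ne, ZMod.natCast_eq_zero_iff]
  intro hd
  exact absurd (Nat.le_of_dvd h0 hd) (by omega)

noncomputable def Tt (p r s j : ℕ) [Fact p.Prime] : Polynomial (ZMod p) :=
  Polynomial.C ((-(r : ZMod p) / (s : ZMod p)) ^ j /
      (((p - 1 - j).factorial : ZMod p) * (j.factorial : ZMod p))) *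
    dP p (p - 1 - j) (r : ZMod p) * dP p j (s : ZMod p)

noncomputable def Ut (p r s i : ℕ) [Fact p.Prime] : Polynomial (ZMod p) :=
  Polynomial.C ((-(r : ZMod p) / (s : ZMod p)) ^ i /
      (((p - 2 - i).factorial : ZMod p) * (i.factorial : ZMod p))) *
    dP p (p - 2 - i) (r : ZMod p) * dP p i (s : ZMod p)

noncomputable def Ft (p r s j : ℕ) [Fact p.Prime] : Polynomial (ZMod p) :=
  Polynomial.C ((-(r : ZMod p) / (s : ZMod p)) ^ j /
      (((p - 1 - j).factorial : ZMod p) * (j.factorial : ZMod p))) *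
    dP p (p - j) (r : ZMod p) * dP p j (s : ZMod p)

noncomputable def Gt (p r s j : ℕ) [Fact p.Prime] : Polynomial (ZMod p) :=
  Polynomial.C ((-(r : ZMod p) / (s : ZMod p)) ^ (j + 1) /
      (((p - 1 - j).factorial : ZMod p) * (j.factorial : ZMod p))) *
    dP p (p - 1 - j) (r : ZMod p) * dP p (j + 1) (s : ZMod p)

/- step A : Ft j + Gt j = Tt j * w j -/
lemma step_FG (p r s : ℕ) [Fact p.Prime] (j : ℕ) (hj : j < p) :
    Ft p r s j + Gt p r s j =
      Tt p r s j *
        (((Polynomial.C (r : ZMod p) * Polynomial.X - 1) - ((p - 1 - j : ℕ) : Polynomial (ZMod p)))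
          + Polynomial.C (-(r : ZMod p) / (s : ZMod p)) *
            ((Polynomial.C (s : ZMod p) * Polynomial.X - 1) - ((j : ℕ) : Polynomial (ZMod p)))) := by
  have e1 : p - j = (p - 1 - j) + 1 := by omega
  rw [Ft, Gt, Tt, e1, dP_succ, dP_succ]
  have hc : (-(r : ZMod p) / (s : ZMod p)) ^ (j + 1) /
      (((p - 1 - j).factorial : ZMod p) * (j.factorial : ZMod p))
      = ((-(r : ZMod p) / (s : ZMod p)) ^ j /
          (((p - 1 - j).factorial : ZMod p) * (j.factorial : ZMod p)))
        * (-(r : ZMod p) / (s : ZMod p)) := by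
    rw [pow_succ]; ring
  rw [hc, map_mul]
  ring

/- telescoping partner : Gt j = - Ft (j+1), for j < p-1 -/
lemma step_GF (p r s : ℕ) [Fact p.Prime] (j : ℕ) (hj : j < p - 1) (hp3 : 3 ≤ p) :
    Gt p r s j = - Ft p r s (j + 1) := by
  have e1 : p - (j + 1) = p - 1 - j := by omega
  have e2 : p - 1 - (j + 1) = p - 2 - j := by omega
  rw [Gt, Ft, e1, e2]
  have hfp : p - 1 - j = (p - 2 - j) + 1 := by omega
  have hcast : ((p - 2 - j : ℕ) : ZMod p) + 1 = -(((j : ℕ) : ZMod p) + 1) := by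
    have hsum : ((p - 2 - j) + 1) + (j + 1) = p := by omega
    have h0 := congrArg (Nat.cast : ℕ → ZMod p) hsum
    push_cast at h0
    rw [ZMod.natCast_self] at h0
    linear_combination h0
  have hne1 : ((j : ℕ) : ZMod p) + 1 ≠ 0 := by
    have : (((j + 1 : ℕ)) : ZMod p) ≠ 0 := cast_ne p (by omega) (by omega)
    push_cast at this; exact this
  have hne2 : (((p - 2 - j).factorial : ℕ) : ZMod p) ≠ 0 := fact_ne p (by omega)
  have hne3 : ((j.factorial : ℕ) : ZMod p) ≠ 0 := fact_ne p (by omega)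
  have hc : (-(r : ZMod p) / (s : ZMod p)) ^ (j + 1) /
      (((p - 1 - j).factorial : ZMod p) * (j.factorial : ZMod p))
      = -((-(r : ZMod p) / (s : ZMod p)) ^ (j + 1) /
          (((p - 2 - j).factorial : ZMod p) * (((j + 1).factorial : ℕ) : ZMod p))) := by
    rw [hfp, Nat.factorial_succ, Nat.factorial_succ]
    push_cast
    rw [hcast]
    generalize -(r : ZMod p) / (s : ZMod p) = xx
    have hD : ((-1 : ZMod p) + -(j : ZMod p)) ≠ 0 := by
      have h' := neg_ne_zero.2 hne1
      convert h' using 1; ring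
    field_simp
  have hCC : Polynomial.C ((-(r : ZMod p) / (s : ZMod p)) ^ (j + 1) /
      (((p - 1 - j).factorial : ZMod p) * (j.factorial : ZMod p)))
      = -Polynomial.C ((-(r : ZMod p) / (s : ZMod p)) ^ (j + 1) /
          (((p - 2 - j).factorial : ZMod p) * (((j + 1).factorial : ℕ) : ZMod p))) := by
    rw [← map_neg]; exact congrArg Polynomial.C hc
  linear_combination (dP p (p - 1 - j) (r : ZMod p) * dP p (j + 1) (s : ZMod p)) * hCC

/- down-shift on the a-side -/
lemma step_D2 (p r s : ℕ) [Fact p.Prime] (j : ℕ) (hj : j < p - 1) (hp3 : 3 ≤ p) :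
    Polynomial.C (((p - 1 - j : ℕ)) : ZMod p) * Tt p r s j
      = ((Polynomial.C (r : ZMod p) * Polynomial.X - 1)
          - ((p - 2 - j : ℕ) : Polynomial (ZMod p))) * Ut p r s j := by
  have hfp : p - 1 - j = (p - 2 - j) + 1 := by omega
  rw [Tt, Ut, hfp, dP_succ]
  have hne2 : (((p - 2 - j).factorial : ℕ) : ZMod p) ≠ 0 := fact_ne p (by omega)
  have hne3 : ((j.factorial : ℕ) : ZMod p) ≠ 0 := fact_ne p (by omega)
  have hne4 : (((p - 2 - j : ℕ)) : ZMod p) + 1 ≠ 0 := by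
    have : (((p - 2 - j + 1 : ℕ)) : ZMod p) ≠ 0 := cast_ne p (by omega) (by omega)
    push_cast at this; exact this
  have hc : (((p - 2 - j + 1 : ℕ)) : ZMod p) *
      ((-(r : ZMod p) / (s : ZMod p)) ^ j /
        ((((p - 2 - j + 1).factorial : ℕ) : ZMod p) * (j.factorial : ZMod p)))
      = (-(r : ZMod p) / (s : ZMod p)) ^ j /
          (((p - 2 - j).factorial : ZMod p) * (j.factorial : ZMod p)) := by
    rw [Nat.factorial_succ]
    push_cast
    generalize -(r : ZMod p) / (s : ZMod p) = xx
    field_simp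
  have hCC : Polynomial.C (((p - 2 - j + 1 : ℕ)) : ZMod p) *
      Polynomial.C ((-(r : ZMod p) / (s : ZMod p)) ^ j /
        ((((p - 2 - j + 1).factorial : ℕ) : ZMod p) * (j.factorial : ZMod p)))
      = Polynomial.C ((-(r : ZMod p) / (s : ZMod p)) ^ j /
          (((p - 2 - j).factorial : ZMod p) * (j.factorial : ZMod p))) := by
    rw [← map_mul]; exact congrArg Polynomial.C hc
  linear_combination (dP p (p - 2 - j) (r : ZMod p) * dP p j (s : ZMod p) *
    ((Polynomial.C (r : ZMod p) * Polynomial.X - 1)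
      - ((p - 2 - j : ℕ) : Polynomial (ZMod p)))) * hCC

/- down-shift on the b-side -/
lemma step_D1 (p r s : ℕ) [Fact p.Prime] (j : ℕ) (hj : j < p - 1) (hp3 : 3 ≤ p) :
    Polynomial.C (((j + 1 : ℕ)) : ZMod p) * Tt p r s (j + 1)
      = Polynomial.C (-(r : ZMod p) / (s : ZMod p)) *
          (((Polynomial.C (s : ZMod p) * Polynomial.X - 1)
            - ((j : ℕ) : Polynomial (ZMod p))) * Ut p r s j) := by
  have e2 : p - 1 - (j + 1) = p - 2 - j := by omega
  rw [Tt, Ut, e2, dP_succ]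
  have hne2 : (((p - 2 - j).factorial : ℕ) : ZMod p) ≠ 0 := fact_ne p (by omega)
  have hne3 : ((j.factorial : ℕ) : ZMod p) ≠ 0 := fact_ne p (by omega)
  have hne1 : (((j + 1 : ℕ)) : ZMod p) ≠ 0 := cast_ne p (by omega) (by omega)
  have hc : (((j + 1 : ℕ)) : ZMod p) *
      ((-(r : ZMod p) / (s : ZMod p)) ^ (j + 1) /
        (((p - 2 - j).factorial : ZMod p) * (((j + 1).factorial : ℕ) : ZMod p)))
      = (-(r : ZMod p) / (s : ZMod p)) *
          ((-(r : ZMod p) / (s : ZMod p)) ^ j /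
            (((p - 2 - j).factorial : ZMod p) * (j.factorial : ZMod p))) := by
    have hne1' : ((j : ℕ) : ZMod p) + 1 ≠ 0 := by push_cast at hne1; exact hne1
    rw [Nat.factorial_succ, pow_succ]
    push_cast
    generalize -(r : ZMod p) / (s : ZMod p) = xx
    field_simp
  have hCC : Polynomial.C (((j + 1 : ℕ)) : ZMod p) *
      Polynomial.C ((-(r : ZMod p) / (s : ZMod p)) ^ (j + 1) /
        (((p - 2 - j).factorial : ZMod p) * (((j + 1).factorial : ℕ) : ZMod p)))
      = Polynomial.C (-(r : ZMod p) / (s : ZMod p)) *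
          Polynomial.C ((-(r : ZMod p) / (s : ZMod p)) ^ j /
            (((p - 2 - j).factorial : ZMod p) * (j.factorial : ZMod p))) := by
    rw [← map_mul, ← map_mul]; exact congrArg Polynomial.C hc
  linear_combination (dP p (p - 2 - j) (r : ZMod p) * (dP p j (s : ZMod p) *
    ((Polynomial.C (s : ZMod p) * Polynomial.X - 1)
      - ((j : ℕ) : Polynomial (ZMod p))))) * hCC

/- evaluation of descPochhammer at C s * X -/
lemma eval_desc_CX (p : ℕ) [Fact p.Prime] (k : ℕ) (c : ZMod p) :
    (descPochhammer (Polynomial (ZMod p)) (k + 1)).eval (Polynomial.C c * Polynomial.X)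
      = (Polynomial.C c * Polynomial.X) * dP p k c := by
  rw [descPochhammer_succ_left, eval_mul, eval_X, eval_comp]
  congr 1
  rw [dP]
  congr 1
  simp
theorem stmt19 (p r s : ℕ) [Fact p.Prime] (hodd : Odd p)
    (hr0 : 0 < r) (hrp : r < p) (hs0 : 0 < s) (hsp : s < p) (hrs : r + s ≠ p) :
    bPoly p r s =
      ∑ k ∈ Finset.range p,
        Polynomial.C ((-(r : ZMod p) / (s : ZMod p)) ^ k /
            (((p - 1 - k).factorial : ZMod p) * (k.factorial : ZMod p))) *
          Polynomial.eval (Polynomial.C (r : ZMod p) * Polynomial.X - 1)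
            (descPochhammer (Polynomial (ZMod p)) (p - 1 - k)) *
          Polynomial.eval (Polynomial.C (s : ZMod p) * Polynomial.X)
            (descPochhammer (Polynomial (ZMod p)) k) := by
  have hp : p.Prime := Fact.out
  have hp2 : p ≠ 2 := by rintro rfl; norm_num [Nat.odd_iff] at hodd
  have hp3 : 3 ≤ p := by have := hp.two_le; omega
  have hs : ((s : ℕ) : ZMod p) ≠ 0 := cast_ne p hs0 hsp
  have hr : ((r : ℕ) : ZMod p) ≠ 0 := cast_ne p hr0 hrp
  have hrsK : ((r : ZMod p) + (s : ZMod p)) ≠ 0 := by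
    have h1 : (((r + s : ℕ)) : ZMod p) ≠ 0 := by
      rw [Ne, ZMod.natCast_eq_zero_iff]
      intro hd
      obtain ⟨k, hk⟩ := hd
      rcases k with _ | _ | k
      · omega
      · omega
      · have h2 : p * 2 ≤ p * (k + 1 + 1) := Nat.mul_le_mul_left p (by omega)
        omega
    push_cast at h1; exact h1
  have hx : (-(r : ZMod p) / (s : ZMod p)) ≠ 0 := div_ne_zero (neg_ne_zero.2 hr) hs
  have hxs : (r : ZMod p) + (-(r : ZMod p) / (s : ZMod p)) * (s : ZMod p) = 0 := by
    rw [div_mul_cancel₀ _ hs]; ring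
  have hxsP : Polynomial.C (r : ZMod p) +
      Polynomial.C (-(r : ZMod p) / (s : ZMod p)) * Polynomial.C (s : ZMod p) = 0 := by
    rw [← map_mul, ← map_add, hxs, map_zero]
  have hbp : bPoly p r s = ∑ j ∈ Finset.range p, Tt p r s j := rfl
  have hrange : Finset.range p = Finset.range ((p - 1) + 1) := by
    congr 1; omega
  have hcast1 : ∀ j, j < p → ((p - 1 - j : ℕ) : ZMod p) = -1 - (j : ZMod p) := by
    intro j hj
    have hsum : (p - 1 - j) + (j + 1) = p := by omega
    have h0 := congrArg (Nat.cast : ℕ → ZMod p) hsum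
    push_cast at h0
    rw [ZMod.natCast_self] at h0
    linear_combination h0
  have hcast2 : ∀ j, j < p - 1 → ((p - 2 - j : ℕ) : ZMod p) = -2 - (j : ZMod p) := by
    intro j hj
    have hsum : (p - 2 - j) + (j + 2) = p := by omega
    have h0 := congrArg (Nat.cast : ℕ → ZMod p) hsum
    push_cast at h0
    rw [ZMod.natCast_self] at h0
    linear_combination h0
  -- step: the weight identity
  have hw : ∀ j ∈ Finset.range p,
      Tt p r s j *
        (((Polynomial.C (r : ZMod p) * Polynomial.X - 1) - ((p - 1 - j : ℕ) : Polynomial (ZMod p)))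
          + Polynomial.C (-(r : ZMod p) / (s : ZMod p)) *
            ((Polynomial.C (s : ZMod p) * Polynomial.X - 1) - ((j : ℕ) : Polynomial (ZMod p))))
      = Polynomial.C ((-(r : ZMod p) / (s : ZMod p)) * ((p - 1 - j : ℕ) : ZMod p)) * Tt p r s j
        + Polynomial.C ((j : ℕ) : ZMod p) * Tt p r s j := by
    intro j hj
    rw [Finset.mem_range] at hj
    have hwj : ((Polynomial.C (r : ZMod p) * Polynomial.X - 1) - ((p - 1 - j : ℕ) : Polynomial (ZMod p)))
          + Polynomial.C (-(r : ZMod p) / (s : ZMod p)) *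
            ((Polynomial.C (s : ZMod p) * Polynomial.X - 1) - ((j : ℕ) : Polynomial (ZMod p)))
        = Polynomial.C ((-(r : ZMod p) / (s : ZMod p)) * ((p - 1 - j : ℕ) : ZMod p))
          + Polynomial.C ((j : ℕ) : ZMod p) := by
      rw [← Polynomial.C_eq_natCast, ← Polynomial.C_eq_natCast, hcast1 j hj]
      simp only [map_mul, map_sub, map_neg, map_one]
      linear_combination Polynomial.X * hxsP
    rw [hwj]; ring
  -- telescoping
  have htel : ∑ j ∈ Finset.range p, (Ft p r s j + Gt p r s j) = Ft p r s 0 + Gt p r s (p - 1) := by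
    rw [Finset.sum_add_distrib]
    have h3 : ∑ j ∈ Finset.range p, Ft p r s j
        = (∑ j ∈ Finset.range (p - 1), Ft p r s (j + 1)) + Ft p r s 0 := by
      rw [hrange]; exact Finset.sum_range_succ' _ _
    have h1 : ∑ j ∈ Finset.range p, Gt p r s j
        = (∑ j ∈ Finset.range (p - 1), Gt p r s j) + Gt p r s (p - 1) := by
      rw [hrange]; exact Finset.sum_range_succ _ _
    have h2 : ∑ j ∈ Finset.range (p - 1), Gt p r s j
        = - ∑ j ∈ Finset.range (p - 1), Ft p r s (j + 1) := by
      rw [← Finset.sum_neg_distrib]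
      exact Finset.sum_congr rfl (fun j hj => by
        rw [Finset.mem_range] at hj; rw [step_GF p r s j hj hp3])
    rw [h3, h1, h2]; ring
  -- boundary
  have hbound : Ft p r s 0 + Gt p r s (p - 1) = 0 := by
    have e0 : p - 0 = p := by omega
    have e1 : p - 1 - (p - 1) = 0 := by omega
    have e2 : (p - 1) + 1 = p := by omega
    rw [Ft, Gt, e0, e1, e2, dP_zero, dP_zero]
    have hdpr : dP p p ((r : ℕ) : ZMod p) = Polynomial.C (r : ZMod p) *
        (Polynomial.X ^ p - Polynomial.X) := by
      rw [dP]; exact desc_p_linear _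
    have hdps : dP p p ((s : ℕ) : ZMod p) = Polynomial.C (s : ZMod p) *
        (Polynomial.X ^ p - Polynomial.X) := by
      rw [dP]; exact desc_p_linear _
    rw [hdpr, hdps]
    have hcoef : ((-(r : ZMod p) / (s : ZMod p)) ^ 0 /
          (((p - 1 - 0).factorial : ZMod p) * ((Nat.factorial 0 : ℕ) : ZMod p))) * (r : ZMod p)
        + ((-(r : ZMod p) / (s : ZMod p)) ^ p /
          (((Nat.factorial 0 : ℕ) : ZMod p) * (((p - 1).factorial : ℕ) : ZMod p))) * (s : ZMod p)
        = 0 := by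
      simp only [pow_zero, Nat.sub_zero, Nat.factorial_zero, Nat.cast_one, one_mul, mul_one,
        ZMod.pow_card]
      linear_combination (1 / (((p - 1).factorial : ℕ) : ZMod p)) * hxs
    have hCC := congrArg Polynomial.C hcoef
    simp only [map_add, map_mul, map_zero] at hCC
    linear_combination (Polynomial.X ^ p - Polynomial.X) * hCC
  -- key vanishing sum
  have hkey : ∑ j ∈ Finset.range p,
      (Polynomial.C ((-(r : ZMod p) / (s : ZMod p)) * ((p - 1 - j : ℕ) : ZMod p)) * Tt p r s j
        + Polynomial.C ((j : ℕ) : ZMod p) * Tt p r s j) = 0 := by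
    have e : ∑ j ∈ Finset.range p, (Ft p r s j + Gt p r s j)
        = ∑ j ∈ Finset.range p,
          (Polynomial.C ((-(r : ZMod p) / (s : ZMod p)) * ((p - 1 - j : ℕ) : ZMod p)) * Tt p r s j
            + Polynomial.C ((j : ℕ) : ZMod p) * Tt p r s j) :=
      Finset.sum_congr rfl (fun j hj => by
        rw [step_FG p r s j (Finset.mem_range.1 hj)]; exact hw j hj)
    rw [← e, htel, hbound]
  rw [Finset.sum_add_distrib] at hkey
  -- shift the first sum
  have hS1 : ∑ j ∈ Finset.range p,
      Polynomial.C ((-(r : ZMod p) / (s : ZMod p)) * ((p - 1 - j : ℕ) : ZMod p)) * Tt p r s j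
      = ∑ j ∈ Finset.range (p - 1),
        Polynomial.C (-(r : ZMod p) / (s : ZMod p)) *
          (((Polynomial.C (r : ZMod p) * Polynomial.X - 1)
            - ((p - 2 - j : ℕ) : Polynomial (ZMod p))) * Ut p r s j) := by
    rw [hrange, Finset.sum_range_succ]
    have hlast : Polynomial.C ((-(r : ZMod p) / (s : ZMod p)) *
        ((p - 1 - (p - 1) : ℕ) : ZMod p)) * Tt p r s (p - 1) = 0 := by
      have e1 : p - 1 - (p - 1) = 0 := by omega
      rw [e1]; simp
    rw [hlast, add_zero]
    refine Finset.sum_congr rfl (fun j hj => ?_)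
    rw [Finset.mem_range] at hj
    rw [map_mul, mul_assoc, step_D2 p r s j hj hp3]
  -- shift the second sum
  have hS2 : ∑ j ∈ Finset.range p, Polynomial.C ((j : ℕ) : ZMod p) * Tt p r s j
      = ∑ j ∈ Finset.range (p - 1),
        Polynomial.C (-(r : ZMod p) / (s : ZMod p)) *
          (((Polynomial.C (s : ZMod p) * Polynomial.X - 1)
            - ((j : ℕ) : Polynomial (ZMod p))) * Ut p r s j) := by
    rw [hrange, Finset.sum_range_succ']
    have h0 : Polynomial.C ((0 : ℕ) : ZMod p) * Tt p r s 0 = 0 := by simp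
    rw [h0, add_zero]
    exact Finset.sum_congr rfl (fun j hj => by
      rw [Finset.mem_range] at hj; exact step_D1 p r s j hj hp3)
  rw [hS1, hS2, ← Finset.sum_add_distrib] at hkey
  -- combine termwise
  have hcomb : ∑ j ∈ Finset.range (p - 1),
      (Polynomial.C (-(r : ZMod p) / (s : ZMod p)) *
          (((Polynomial.C (r : ZMod p) * Polynomial.X - 1)
            - ((p - 2 - j : ℕ) : Polynomial (ZMod p))) * Ut p r s j)
        + Polynomial.C (-(r : ZMod p) / (s : ZMod p)) *
          (((Polynomial.C (s : ZMod p) * Polynomial.X - 1)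
            - ((j : ℕ) : Polynomial (ZMod p))) * Ut p r s j))
      = Polynomial.C (-(r : ZMod p) / (s : ZMod p)) *
          (Polynomial.C ((r : ZMod p) + (s : ZMod p)) * Polynomial.X) *
        ∑ j ∈ Finset.range (p - 1), Ut p r s j := by
    rw [Finset.mul_sum]
    refine Finset.sum_congr rfl (fun j hj => ?_)
    rw [Finset.mem_range] at hj
    have hab : ((Polynomial.C (r : ZMod p) * Polynomial.X - 1)
          - ((p - 2 - j : ℕ) : Polynomial (ZMod p)))
        + ((Polynomial.C (s : ZMod p) * Polynomial.X - 1)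
          - ((j : ℕ) : Polynomial (ZMod p)))
        = Polynomial.C ((r : ZMod p) + (s : ZMod p)) * Polynomial.X := by
      rw [← Polynomial.C_eq_natCast, ← Polynomial.C_eq_natCast, hcast2 j hj]
      simp only [map_add, map_sub, map_neg, map_one, map_ofNat]
      ring
    linear_combination (Polynomial.C (-(r : ZMod p) / (s : ZMod p)) * Ut p r s j) * hab
  rw [hcomb] at hkey
  have hA : Polynomial.C (-(r : ZMod p) / (s : ZMod p)) *
      (Polynomial.C ((r : ZMod p) + (s : ZMod p)) * Polynomial.X) ≠ 0 :=
    mul_ne_zero (Polynomial.C_ne_zero.2 hx)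
      (mul_ne_zero (Polynomial.C_ne_zero.2 hrsK) Polynomial.X_ne_zero)
  have hUsum : ∑ j ∈ Finset.range (p - 1), Ut p r s j = 0 :=
    (mul_eq_zero.1 hkey).resolve_left hA
  -- final computation
  rw [hbp, ← sub_eq_zero, ← Finset.sum_sub_distrib]
  have htermS : ∀ j ∈ Finset.range (p - 1),
      (Tt p r s (j + 1) -
        Polynomial.C ((-(r : ZMod p) / (s : ZMod p)) ^ (j + 1) /
            (((p - 1 - (j + 1)).factorial : ZMod p) * ((j + 1).factorial : ZMod p))) *
          Polynomial.eval (Polynomial.C (r : ZMod p) * Polynomial.X - 1)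
            (descPochhammer (Polynomial (ZMod p)) (p - 1 - (j + 1))) *
          Polynomial.eval (Polynomial.C (s : ZMod p) * Polynomial.X)
            (descPochhammer (Polynomial (ZMod p)) (j + 1)))
      = -(Polynomial.C (-(r : ZMod p) / (s : ZMod p)) * Ut p r s j) := by
    intro j hj
    rw [Finset.mem_range] at hj
    have e2 : p - 1 - (j + 1) = p - 2 - j := by omega
    rw [Tt, Ut, e2, dP_succ, eval_desc_CX]
    have hne2 : (((p - 2 - j).factorial : ℕ) : ZMod p) ≠ 0 := fact_ne p (by omega)
    have hne3 : ((j.factorial : ℕ) : ZMod p) ≠ 0 := fact_ne p (by omega)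
    have hne1 : (((j + 1 : ℕ)) : ZMod p) ≠ 0 := cast_ne p (by omega) (by omega)
    have hc : (((j + 1 : ℕ)) : ZMod p) *
        ((-(r : ZMod p) / (s : ZMod p)) ^ (j + 1) /
          (((p - 2 - j).factorial : ZMod p) * (((j + 1).factorial : ℕ) : ZMod p)))
        = (-(r : ZMod p) / (s : ZMod p)) *
            ((-(r : ZMod p) / (s : ZMod p)) ^ j /
              (((p - 2 - j).factorial : ZMod p) * (j.factorial : ZMod p))) := by
      have hne1' : ((j : ℕ) : ZMod p) + 1 ≠ 0 := by push_cast at hne1; exact hne1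
      rw [Nat.factorial_succ, pow_succ]
      push_cast
      generalize -(r : ZMod p) / (s : ZMod p) = xx
      field_simp
    have hCC := congrArg Polynomial.C hc
    push_cast at hCC
    simp only [map_mul, map_add, map_one] at hCC
    rw [show ((j : ℕ) : Polynomial (ZMod p))
        = Polynomial.C ((j : ℕ) : ZMod p) from (Polynomial.C_eq_natCast _).symm]
    simp only [dP]
    linear_combination (-(Polynomial.eval (Polynomial.C ((r : ℕ) : ZMod p) * Polynomial.X - 1)
      (descPochhammer (Polynomial (ZMod p)) (p - 2 - j)) *
      Polynomial.eval (Polynomial.C ((s : ℕ) : ZMod p) * Polynomial.X - 1)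
      (descPochhammer (Polynomial (ZMod p)) j))) * hCC
  have hterm0 : (Tt p r s 0 -
      Polynomial.C ((-(r : ZMod p) / (s : ZMod p)) ^ 0 /
          (((p - 1 - 0).factorial : ZMod p) * ((Nat.factorial 0 : ℕ) : ZMod p))) *
        Polynomial.eval (Polynomial.C (r : ZMod p) * Polynomial.X - 1)
          (descPochhammer (Polynomial (ZMod p)) (p - 1 - 0)) *
        Polynomial.eval (Polynomial.C (s : ZMod p) * Polynomial.X)
          (descPochhammer (Polynomial (ZMod p)) 0)) = 0 := by
    rw [Tt]
    simp [dP]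
  rw [hrange, Finset.sum_range_succ']
  rw [Finset.sum_congr rfl htermS, hterm0, add_zero, Finset.sum_neg_distrib,
    ← Finset.mul_sum, hUsum, mul_zero, neg_zero]
end
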